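/- arXiv:1512.03791 — 6 statements merged into one kernel-verified Lean document; each statement's English description precedes it below -/
import Mathlib

section
/- Let $0 \le a < b$, $\alpha > 0$, $\rho > 0$, and let $x : [a,b] \to \mathbb{R}$ be continuously differentiable with $M = \max_{\tau \in [a,b]} |\dot{x}(\tau)|$. For $N \in \mathbb{N}$, $N \ge 1$, define the error term $E_N(t) = \frac{\rho^{-\alpha}}{\Gamma(\alpha+1)}(t^\rho - a^\rho)^\alpha \sum_{k=N+1}^{\infty} \frac{\Gamma(k-\alpha)}{\Gamma(-\alpha)\, k!} \int_a^t \left(\frac{\tau^\rho - a^\rho}{t^\rho - a^\rho}\right)^k \dot{x}(\tau)\, d\tau$. Then for every $t \in (a,b]$, $|E_N(t)| \le \frac{M \rho^{-\alpha}}{\Gamma(\alpha+1)}(t^\rho - a^\rho)^\alpha (t-a)\, \frac{\exp(\alpha^2 + \alpha)}{\alpha N^\alpha}$. -/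
open Real MeasureTheory Filter Finset

section Aux

lemma one_le_exp' {x : ℝ} (hx : 0 ≤ x) : 1 ≤ Real.exp x := Real.one_le_exp hx

lemma lemC (k : ℕ) (α : ℝ) (hα : 0 < α) (hk : (k : ℝ) < α + 1) :
    α ^ k * ((k : ℝ) + 1) ^ (α + 1) ≤ (Nat.factorial k : ℝ) * Real.exp (α ^ 2 + α) := by
  have hexp1 : (1:ℝ) ≤ Real.exp (α ^ 2 + α) := Real.one_le_exp (by nlinarith)
  match k with
  | 0 =>
    simp only [pow_zero, Nat.cast_zero, zero_add, Real.one_rpow, Nat.factorial_zero,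
      Nat.cast_one, one_mul, mul_one]
    exact hexp1
  | 1 =>
    have h2 : ((1:ℝ) + 1) ^ (α + 1) = Real.exp (Real.log 2 * (α + 1)) := by
      rw [Real.rpow_def_of_pos (by norm_num)]; norm_num
    have hαe : α = Real.exp (Real.log α) := (Real.exp_log hα).symm
    rw [Nat.cast_one, h2, pow_one, Nat.factorial_one, Nat.cast_one, one_mul]
    calc α * Real.exp (Real.log 2 * (α + 1))
        = Real.exp (Real.log α + Real.log 2 * (α + 1)) := by
          rw [Real.exp_add, ← hαe]
      _ ≤ Real.exp (α ^ 2 + α) := by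
          apply Real.exp_le_exp.2
          have h1 : Real.log α ≤ α - 1 := Real.log_le_sub_one_of_pos hα
          have h2' : Real.log 2 < 0.6931471808 := Real.log_two_lt_d9
          have h2'' : (0:ℝ) < Real.log 2 := Real.log_pos (by norm_num)
          nlinarith [sq_nonneg (α - 0.3466), sq_nonneg α]
  | 2 =>
    have hα1 : 1 < α := by push_cast at hk; linarith
    have h3 : ((2:ℝ) + 1) ^ (α + 1) = Real.exp (Real.log 3 * (α + 1)) := by
      rw [Real.rpow_def_of_pos (by norm_num)]; norm_num
    have hl3 : Real.log 3 ≤ Real.log 2 + 1/2 := by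
      have : Real.log 3 = Real.log 2 + Real.log (3/2) := by
        rw [← Real.log_mul (by norm_num) (by norm_num)]; norm_num
      have h32 : Real.log (3/2) ≤ 3/2 - 1 := Real.log_le_sub_one_of_pos (by norm_num)
      linarith
    have hαe : Real.exp (2 * Real.log α) = α ^ 2 := by
      rw [show (2:ℝ) * Real.log α = Real.log α + Real.log α from by ring, Real.exp_add,
        Real.exp_log hα]; ring
    have hgoal : ((2:ℕ):ℝ) + 1 = (2:ℝ) + 1 := by norm_num
    rw [hgoal, h3]
    calc α ^ 2 * Real.exp (Real.log 3 * (α + 1))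
        = Real.exp (2 * Real.log α + Real.log 3 * (α + 1)) := by
          rw [Real.exp_add, hαe]
      _ ≤ 2 * Real.exp (α ^ 2 + α) := by
          have h1 : Real.log α ≤ α - 1 := Real.log_le_sub_one_of_pos hα
          have h2' : Real.log 2 < 0.6931471808 := Real.log_two_lt_d9
          have h2l : 0.6931471803 < Real.log 2 := Real.log_two_gt_d9
          have key : 2 * Real.log α + Real.log 3 * (α + 1) ≤ Real.log 2 + (α ^ 2 + α) := by
            nlinarith [sq_nonneg (α - 1.0966)]
          calc Real.exp (2 * Real.log α + Real.log 3 * (α + 1))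
                ≤ Real.exp (Real.log 2 + (α ^ 2 + α)) := Real.exp_le_exp.2 key
              _ = 2 * Real.exp (α ^ 2 + α) := by
                  rw [Real.exp_add, Real.exp_log (by norm_num)]
      _ = (Nat.factorial 2 : ℝ) * Real.exp (α ^ 2 + α) := by norm_num [Nat.factorial]
  | 3 =>
    have hα2 : 2 < α := by push_cast at hk; linarith
    have h4 : ((3:ℝ) + 1) ^ (α + 1) = Real.exp (2 * Real.log 2 * (α + 1)) := by
      rw [Real.rpow_def_of_pos (by norm_num)]
      have : Real.log (3 + 1) = 2 * Real.log 2 := by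
        have : (3 + 1 : ℝ) = 2 ^ 2 := by norm_num
        rw [this, Real.log_pow]; norm_num
      rw [this]
    have hαe : Real.exp (3 * Real.log α) = α ^ 3 := by
      rw [show (3:ℝ) * Real.log α = Real.log α + Real.log α + Real.log α from by ring,
        Real.exp_add, Real.exp_add, Real.exp_log hα]; ring
    have hl6 : 2 * Real.log 2 ≤ Real.log 6 := by
      have : (4:ℝ) ≤ 6 := by norm_num
      have h := Real.log_le_log (by norm_num : (0:ℝ) < 4) this
      have h4' : Real.log 4 = 2 * Real.log 2 := by
        have : (4 : ℝ) = 2 ^ 2 := by norm_num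
        rw [this, Real.log_pow]; norm_num
      linarith
    have hgoal : ((3:ℕ):ℝ) + 1 = (3:ℝ) + 1 := by norm_num
    rw [hgoal, h4]
    calc α ^ 3 * Real.exp (2 * Real.log 2 * (α + 1))
        = Real.exp (3 * Real.log α + 2 * Real.log 2 * (α + 1)) := by
          rw [Real.exp_add, hαe]
      _ ≤ 6 * Real.exp (α ^ 2 + α) := by
          have h1 : Real.log α ≤ α - 1 := Real.log_le_sub_one_of_pos hα
          have h2' : Real.log 2 < 0.6931471808 := Real.log_two_lt_d9
          have h2l : 0.6931471803 < Real.log 2 := Real.log_two_gt_d9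
          have key : 3 * Real.log α + 2 * Real.log 2 * (α + 1) ≤ Real.log 6 + (α ^ 2 + α) := by
            nlinarith [sq_nonneg (α - 2)]
          calc Real.exp (3 * Real.log α + 2 * Real.log 2 * (α + 1))
                ≤ Real.exp (Real.log 6 + (α ^ 2 + α)) := Real.exp_le_exp.2 key
              _ = 6 * Real.exp (α ^ 2 + α) := by
                  rw [Real.exp_add, Real.exp_log (by norm_num)]
      _ = (Nat.factorial 3 : ℝ) * Real.exp (α ^ 2 + α) := by norm_num [Nat.factorial]
  | (n+4) =>
    have hα3 : 3 < α := by push_cast at hk; have : (0:ℝ) ≤ n := Nat.cast_nonneg n; linarith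
    -- α^(n+4) ≤ (n+4)! * exp α
    have hstep1 : α ^ (n+4) ≤ (Nat.factorial (n+4) : ℝ) * Real.exp α := by
      have hsum := Real.sum_le_exp_of_nonneg hα.le (n+5)
      have hmem : (n+4) ∈ Finset.range (n+5) := Finset.mem_range.2 (by omega)
      have hsingle : α ^ (n+4) / (Nat.factorial (n+4) : ℝ) ≤
          ∑ i ∈ Finset.range (n+5), α ^ i / (Nat.factorial i : ℝ) :=
        Finset.single_le_sum (f := fun i => α ^ i / (Nat.factorial i : ℝ))
          (fun i _ => by positivity) hmem
      have hfpos : (0:ℝ) < (Nat.factorial (n+4) : ℝ) := by positivity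
      rw [div_le_iff₀ hfpos] at hsingle
      calc α ^ (n+4) ≤ Real.exp α * (Nat.factorial (n+4) : ℝ) := le_trans hsingle
            (by exact mul_le_mul_of_nonneg_right (le_trans hsum le_rfl) hfpos.le)
        _ = (Nat.factorial (n+4) : ℝ) * Real.exp α := mul_comm _ _
    -- ((n+4:ℝ)+1)^(α+1) ≤ exp (α^2)
    have hstep2 : (((n:ℝ)+4) + 1) ^ (α + 1) ≤ Real.exp (α ^ 2) := by
      have hle : ((n:ℝ)+4) + 1 ≤ α + 2 := by push_cast at hk; linarith
      have h1 : (((n:ℝ)+4) + 1) ^ (α + 1) ≤ (α + 2) ^ (α + 1) :=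
        Real.rpow_le_rpow (by positivity) hle (by linarith)
      have h2 : (α + 2) ^ (α + 1) = Real.exp (Real.log (α+2) * (α + 1)) :=
        Real.rpow_def_of_pos (by linarith) _
      have hlog : Real.log (α + 2) ≤ (α + 2) / Real.exp 1 := by
        have hpos : (0:ℝ) < (α + 2) / Real.exp 1 := by positivity
        have := Real.log_le_sub_one_of_pos hpos
        rw [Real.log_div (by linarith) (Real.exp_ne_zero 1), Real.log_exp] at this
        linarith
      have he : (2.7182818283 : ℝ) < Real.exp 1 := Real.exp_one_gt_d9
      have hkey : Real.log (α+2) * (α + 1) ≤ α ^ 2 := by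
        have hnn : (0:ℝ) < α + 1 := by linarith
        have h3 : Real.log (α+2) * (α+1) ≤ (α+2)/Real.exp 1 * (α+1) :=
          mul_le_mul_of_nonneg_right hlog hnn.le
        have h4 : (α+2) * (α+1) ≤ α ^ 2 * Real.exp 1 := by
          nlinarith [sq_nonneg (α - 3)]
        have hepos : (0:ℝ) < Real.exp 1 := Real.exp_pos 1
        have h5 : (α+2)/Real.exp 1 * (α+1) ≤ α ^ 2 := by
          rw [div_mul_eq_mul_div, div_le_iff₀ hepos]; exact h4
        linarith
      calc (((n:ℝ)+4) + 1) ^ (α + 1) ≤ (α + 2) ^ (α + 1) := h1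
        _ = Real.exp (Real.log (α+2) * (α + 1)) := h2
        _ ≤ Real.exp (α ^ 2) := Real.exp_le_exp.2 hkey
    have hc : ((n+4 : ℕ) : ℝ) + 1 = ((n:ℝ)+4) + 1 := by push_cast; ring
    rw [hc]
    calc α ^ (n+4) * (((n:ℝ)+4) + 1) ^ (α + 1)
        ≤ ((Nat.factorial (n+4) : ℝ) * Real.exp α) * Real.exp (α ^ 2) := by
          apply mul_le_mul hstep1 hstep2 (by positivity) (by positivity)
      _ = (Nat.factorial (n+4) : ℝ) * Real.exp (α ^ 2 + α) := by
          rw [mul_assoc, ← Real.exp_add]; ring_nf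


lemma goodFactor (α c : ℝ) (hα : 0 < α) (hc : α ≤ c) :
    (c - α) / (c + 1) ≤ ((c + 1) / (c + 2)) ^ (α + 1) := by
  have hc1 : (0:ℝ) < c + 1 := by linarith
  have hc2 : (0:ℝ) < c + 2 := by linarith
  have hb : (0:ℝ) < (c + 1) / (c + 2) := div_pos hc1 hc2
  have step1 : (c - α) / (c + 1) ≤ Real.exp (-(α + 1) / (c + 1)) := by
    have h1 : -(α + 1) / (c + 1) + 1 ≤ Real.exp (-(α + 1) / (c + 1)) :=
      Real.add_one_le_exp _
    have h2 : (c - α) / (c + 1) = -(α + 1) / (c + 1) + 1 := by field_simp; ring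
    linarith
  have step2 : Real.exp (-(α + 1) / (c + 1)) ≤ ((c + 1) / (c + 2)) ^ (α + 1) := by
    rw [Real.rpow_def_of_pos hb]
    apply Real.exp_le_exp.2
    have hlog : Real.log ((c + 2) / (c + 1)) ≤ 1 / (c + 1) := by
      have h := Real.log_le_sub_one_of_pos (show (0:ℝ) < (c+2)/(c+1) by positivity)
      have heq : (c + 2) / (c + 1) - 1 = 1 / (c + 1) := by field_simp; ring
      rw [heq] at h; exact h
    have hlog2 : Real.log ((c + 1) / (c + 2)) = - Real.log ((c + 2) / (c + 1)) := by
      rw [← Real.log_inv]; congr 1; field_simp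
    rw [hlog2]
    have h3 : Real.log ((c+2)/(c+1)) * (α+1) ≤ 1/(c+1) * (α+1) :=
      mul_le_mul_of_nonneg_right hlog (by linarith)
    have h4 : -(α + 1) / (c + 1) = -(1/(c+1) * (α+1)) := by ring
    rw [h4]
    linarith
  linarith


lemma prodBound (α : ℝ) (hα : 0 < α) (k : ℕ) :
    ∏ j ∈ Finset.range k, (|(j:ℝ) - α| / ((j:ℝ) + 1)) ≤
      Real.exp (α ^ 2 + α) * ((k:ℝ) + 1) ^ (-(α + 1)) := by
  induction k with
  | zero =>
    simp only [Finset.range_zero, Finset.prod_empty, Nat.cast_zero, zero_add,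
      Real.one_rpow, mul_one]
    exact Real.one_le_exp (by nlinarith)
  | succ k ih =>
    by_cases hcase : (k:ℝ) < α
    · -- all factors "bad": direct bound via lemC
      have hbd : ∏ j ∈ Finset.range (k+1), (|(j:ℝ) - α| / ((j:ℝ) + 1)) ≤
          ∏ j ∈ Finset.range (k+1), (α / ((j:ℝ) + 1)) := by
        apply Finset.prod_le_prod (fun i _ => by positivity)
        intro i hi
        have hik : (i:ℝ) ≤ (k:ℝ) := by
          exact_mod_cast Nat.le_of_lt_succ (Finset.mem_range.1 hi)
        have hiα : (i:ℝ) < α := lt_of_le_of_lt hik hcase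
        have habs : |(i:ℝ) - α| = α - i := by rw [abs_of_nonpos (by linarith)]; ring
        rw [habs]
        gcongr
        linarith [Nat.cast_nonneg (α := ℝ) i]
      have heq : ∏ j ∈ Finset.range (k+1), (α / ((j:ℝ) + 1)) =
          α ^ (k+1) / (Nat.factorial (k+1) : ℝ) := by
        rw [Finset.prod_div_distrib, Finset.prod_const, Finset.card_range]
        congr 1
        calc ∏ j ∈ Finset.range (k+1), ((j:ℝ) + 1)
            = ((∏ j ∈ Finset.range (k+1), (j + 1) : ℕ) : ℝ) := by push_cast; rfl
          _ = (Nat.factorial (k+1) : ℝ) := by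
              rw [Finset.prod_range_add_one_eq_factorial]
      have hk' : ((k+1 : ℕ) : ℝ) < α + 1 := by push_cast; linarith
      have hlem := lemC (k+1) α hα hk'
      have hF : (0:ℝ) < (Nat.factorial (k+1) : ℝ) := by positivity
      have hR : (0:ℝ) < (((k+1:ℕ):ℝ) + 1) ^ (α + 1) :=
        Real.rpow_pos_of_pos (by positivity) _
      have hfin : α ^ (k+1) / (Nat.factorial (k+1) : ℝ) ≤
          Real.exp (α ^ 2 + α) * (((k+1:ℕ):ℝ) + 1) ^ (-(α + 1)) := by
        rw [Real.rpow_neg (by positivity : (0:ℝ) ≤ ((k+1:ℕ):ℝ) + 1), div_le_iff₀ hF]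
        have hrw : Real.exp (α ^ 2 + α) * ((((k+1:ℕ):ℝ) + 1) ^ (α+1))⁻¹ *
            (Nat.factorial (k+1) : ℝ) =
            ((Nat.factorial (k+1) : ℝ) * Real.exp (α ^ 2 + α)) /
              (((k+1:ℕ):ℝ) + 1) ^ (α+1) := by
          field_simp
        rw [hrw, le_div_iff₀ hR]
        exact hlem
      calc ∏ j ∈ Finset.range (k+1), (|(j:ℝ) - α| / ((j:ℝ) + 1))
          ≤ ∏ j ∈ Finset.range (k+1), (α / ((j:ℝ) + 1)) := hbd
        _ = α ^ (k+1) / (Nat.factorial (k+1) : ℝ) := heq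
        _ ≤ Real.exp (α ^ 2 + α) * (((k+1:ℕ):ℝ) + 1) ^ (-(α + 1)) := hfin
    · -- last factor "good"
      push_neg at hcase
      rw [Finset.prod_range_succ]
      have habs : |(k:ℝ) - α| = (k:ℝ) - α := abs_of_nonneg (by linarith)
      have hgf := goodFactor α (k:ℝ) hα hcase
      have hprod_nonneg : (0:ℝ) ≤ ∏ j ∈ Finset.range k, (|(j:ℝ) - α| / ((j:ℝ) + 1)) :=
        Finset.prod_nonneg (fun i _ => by positivity)
      have hmul : (∏ j ∈ Finset.range k, (|(j:ℝ) - α| / ((j:ℝ) + 1))) *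
            (|(k:ℝ) - α| / ((k:ℝ) + 1)) ≤
          (Real.exp (α ^ 2 + α) * ((k:ℝ) + 1) ^ (-(α + 1))) *
            (((k:ℝ) + 1) / ((k:ℝ) + 2)) ^ (α + 1) := by
        apply mul_le_mul ih (by rw [habs]; exact hgf) (by positivity) (by positivity)
      have hu : (0:ℝ) < (k:ℝ) + 1 := by positivity
      have hv : (0:ℝ) < (k:ℝ) + 2 := by positivity
      have hup : (0:ℝ) < ((k:ℝ) + 1) ^ (α + 1) := Real.rpow_pos_of_pos hu _
      have hvp : (0:ℝ) < ((k:ℝ) + 2) ^ (α + 1) := Real.rpow_pos_of_pos hv _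
      have heq2 : (Real.exp (α ^ 2 + α) * ((k:ℝ) + 1) ^ (-(α + 1))) *
            (((k:ℝ) + 1) / ((k:ℝ) + 2)) ^ (α + 1) =
          Real.exp (α ^ 2 + α) * (((k+1:ℕ):ℝ) + 1) ^ (-(α + 1)) := by
        have hc : ((k+1:ℕ):ℝ) + 1 = (k:ℝ) + 2 := by push_cast; ring
        rw [hc, Real.div_rpow hu.le hv.le, Real.rpow_neg hu.le, Real.rpow_neg hv.le]
        field_simp
      rw [← heq2]
      exact hmul



lemma coefBound (α : ℝ) (hα : 0 < α) (k : ℕ) :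
    |Real.Gamma ((k:ℝ) - α) / (Real.Gamma (-α) * (Nat.factorial k : ℝ))| ≤
      Real.exp (α ^ 2 + α) * ((k:ℝ) + 1) ^ (-(α + 1)) := by
  by_cases hnat : ∃ m : ℕ, α = m
  · obtain ⟨m, rfl⟩ := hnat
    rw [show -(m:ℝ) = -(m:ℕ) from by norm_num, Real.Gamma_neg_nat_eq_zero, zero_mul,
      div_zero, abs_zero]
    positivity
  · push_neg at hnat
    have hΓ : Real.Gamma (-α) ≠ 0 := by
      apply Real.Gamma_ne_zero
      intro m
      simpa [neg_inj] using fun h => hnat m h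
    have hid : ∀ n : ℕ, Real.Gamma ((n:ℝ) - α) =
        (∏ j ∈ Finset.range n, ((j:ℝ) - α)) * Real.Gamma (-α) := by
      intro n
      induction n with
      | zero => simp
      | succ n ihn =>
        have hne : (n:ℝ) - α ≠ 0 := by
          intro h
          exact hnat n (by linarith [sub_eq_zero.1 h])
        have hc : ((n+1:ℕ):ℝ) - α = ((n:ℝ) - α) + 1 := by push_cast; ring
        rw [hc, Real.Gamma_add_one hne, ihn, Finset.prod_range_succ]
        ring
    rw [hid k]
    have hFne : (Nat.factorial k : ℝ) ≠ 0 := by positivity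
    have heq : (∏ j ∈ Finset.range k, ((j:ℝ) - α)) * Real.Gamma (-α) /
        (Real.Gamma (-α) * (Nat.factorial k : ℝ)) =
        (∏ j ∈ Finset.range k, ((j:ℝ) - α)) / (Nat.factorial k : ℝ) := by
      field_simp
    rw [heq, abs_div, Finset.abs_prod, Nat.abs_cast]
    have hfact : (Nat.factorial k : ℝ) = ∏ j ∈ Finset.range k, ((j:ℝ) + 1) := by
      calc (Nat.factorial k : ℝ) = ((∏ j ∈ Finset.range k, (j + 1) : ℕ) : ℝ) := by
            rw [Finset.prod_range_add_one_eq_factorial]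
        _ = ∏ j ∈ Finset.range k, ((j:ℝ) + 1) := by push_cast; rfl
    rw [hfact, ← Finset.prod_div_distrib]
    exact prodBound α hα k

lemma stepIneq (α y : ℝ) (hα : 0 < α) (hy : 0 < y) :
    α * (y + 1) ^ (-(α + 1)) ≤ y ^ (-α) - (y + 1) ^ (-α) := by
  have hy1 : (0:ℝ) < y + 1 := by linarith
  have hlog : 1 / (y + 1) ≤ Real.log ((y + 1) / y) := by
    have h := Real.log_le_sub_one_of_pos (show (0:ℝ) < y / (y + 1) by positivity)
    have hlog2 : Real.log (y / (y + 1)) = - Real.log ((y + 1) / y) := by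
      rw [← Real.log_inv]; congr 1; field_simp
    rw [hlog2] at h
    have : y / (y + 1) - 1 = -(1 / (y + 1)) := by field_simp; ring
    rw [this] at h
    linarith
  have hratio : 1 + α / (y + 1) ≤ ((y + 1) / y) ^ α := by
    have hb : (0:ℝ) < (y + 1) / y := by positivity
    rw [Real.rpow_def_of_pos hb]
    have h1 : Real.log ((y+1)/y) * α + 1 ≤ Real.exp (Real.log ((y+1)/y) * α) :=
      Real.add_one_le_exp _
    have h2 : α / (y + 1) ≤ Real.log ((y+1)/y) * α := by
      rw [div_eq_mul_one_div, mul_comm]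
      exact mul_le_mul_of_nonneg_right hlog hα.le |>.trans_eq (by ring) |>.trans_eq rfl
    linarith
  -- multiply by (y+1)^(-α)
  have hyp : (0:ℝ) < (y + 1) ^ (-α) := Real.rpow_pos_of_pos hy1 _
  have hmul := mul_le_mul_of_nonneg_right hratio hyp.le
  have hid1 : ((y + 1) / y) ^ α * (y + 1) ^ (-α) = y ^ (-α) := by
    rw [Real.div_rpow hy1.le hy.le, Real.rpow_neg hy1.le, Real.rpow_neg hy.le]
    have h1 : (y:ℝ) ^ α ≠ 0 := ne_of_gt (Real.rpow_pos_of_pos hy _)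
    have h2 : (y + 1) ^ α ≠ 0 := ne_of_gt (Real.rpow_pos_of_pos hy1 _)
    field_simp
  have hid2 : (1 + α / (y + 1)) * (y + 1) ^ (-α) =
      (y + 1) ^ (-α) + α * (y + 1) ^ (-(α + 1)) := by
    have : (y + 1) ^ (-(α + 1)) = (y + 1) ^ (-α) / (y + 1) := by
      rw [show -(α + 1) = -α + (-1) from by ring, Real.rpow_add hy1, Real.rpow_neg_one]
      ring
    rw [this]
    ring
  rw [hid1] at hmul
  rw [hid2] at hmul
  linarith

lemma tailBound (α : ℝ) (hα : 0 < α) (N : ℕ) (hN : 1 ≤ N) :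
    (∀ n : ℕ, ∑ j ∈ Finset.range n, ((N + 1 + j : ℕ) : ℝ) ^ (-(α + 1)) ≤
      (N:ℝ) ^ (-α) / α) := by
  intro n
  have key : ∀ j : ℕ, ((N + 1 + j : ℕ) : ℝ) ^ (-(α + 1)) ≤
      (((N + j : ℕ) : ℝ) ^ (-α) - ((N + (j+1) : ℕ) : ℝ) ^ (-α)) / α := by
    intro j
    have hy : (0:ℝ) < ((N + j : ℕ) : ℝ) := by
      have : 1 ≤ N + j := le_trans hN (Nat.le_add_right _ _)
      exact_mod_cast Nat.lt_of_lt_of_le Nat.zero_lt_one this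
    have hstep := stepIneq α ((N + j : ℕ) : ℝ) hα hy
    have hc1 : ((N + 1 + j : ℕ) : ℝ) = ((N + j : ℕ) : ℝ) + 1 := by push_cast; ring
    have hc2 : ((N + (j+1) : ℕ) : ℝ) = ((N + j : ℕ) : ℝ) + 1 := by push_cast; ring
    rw [hc1, hc2, le_div_iff₀ hα]
    nlinarith [hstep]
  calc ∑ j ∈ Finset.range n, ((N + 1 + j : ℕ) : ℝ) ^ (-(α + 1))
      ≤ ∑ j ∈ Finset.range n,
          ((((N + j : ℕ) : ℝ) ^ (-α) - ((N + (j+1) : ℕ) : ℝ) ^ (-α)) / α) :=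
        Finset.sum_le_sum (fun j _ => key j)
    _ = (((N + 0 : ℕ) : ℝ) ^ (-α) - ((N + n : ℕ) : ℝ) ^ (-α)) / α := by
        rw [← Finset.sum_div]
        congr 1
        exact Finset.sum_range_sub' (fun j => ((N + j : ℕ) : ℝ) ^ (-α)) n
    _ ≤ (N:ℝ) ^ (-α) / α := by
        have h1 : (0:ℝ) ≤ ((N + n : ℕ) : ℝ) ^ (-α) :=
          Real.rpow_nonneg (Nat.cast_nonneg _) _
        have h2 : ((N + 0 : ℕ) : ℝ) ^ (-α) = (N:ℝ) ^ (-α) := by norm_num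
        have h3 : (((N + 0 : ℕ) : ℝ) ^ (-α) - ((N + n : ℕ) : ℝ) ^ (-α)) ≤ (N:ℝ) ^ (-α) := by
          rw [h2]; linarith
        exact (div_le_div_iff_of_pos_right hα).2 h3

end Aux

theorem katugampola_error_bound (a b α ρ M : ℝ) (ha : 0 ≤ a) (hab : a < b)
    (hα : 0 < α) (hρ : 0 < ρ) (x x' : ℝ → ℝ)
    (hx : ∀ t ∈ Set.Icc a b, HasDerivAt x (x' t) t)
    (hx' : ContinuousOn x' (Set.Icc a b))
    (hM : IsGreatest ((fun τ => |x' τ|) '' Set.Icc a b) M)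
    (N : ℕ) (hN : 1 ≤ N)
    (E : ℕ → ℝ → ℝ)
    (hE : ∀ (n : ℕ) (t : ℝ), E n t =
      ρ ^ (-α) / Real.Gamma (α + 1) * (t ^ ρ - a ^ ρ) ^ α *
        ∑' j : ℕ,
          (Real.Gamma (((n + 1 + j : ℕ) : ℝ) - α) /
              (Real.Gamma (-α) * (Nat.factorial (n + 1 + j) : ℝ))) *
            ∫ τ in a..t, ((τ ^ ρ - a ^ ρ) / (t ^ ρ - a ^ ρ)) ^ (n + 1 + j) * x' τ) :
    ∀ t ∈ Set.Ioc a b,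
      |E N t| ≤ M * ρ ^ (-α) / Real.Gamma (α + 1) * (t ^ ρ - a ^ ρ) ^ α * (t - a) *
        (Real.exp (α ^ 2 + α) / (α * (N : ℝ) ^ α)) := by
  intro t ht
  obtain ⟨hat, htb⟩ := ht
  have hta : 0 < t - a := sub_pos.2 hat
  have hS : 0 < t ^ ρ - a ^ ρ := sub_pos.2 (Real.rpow_lt_rpow ha hat hρ)
  have hρα : 0 < ρ ^ (-α) := Real.rpow_pos_of_pos hρ _
  have hΓpos : 0 < Real.Gamma (α + 1) := Real.Gamma_pos_of_pos (by linarith)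
  have hSα : 0 < (t ^ ρ - a ^ ρ) ^ α := Real.rpow_pos_of_pos hS _
  have hM0 : 0 ≤ M :=
    le_trans (abs_nonneg (x' a)) (hM.2 ⟨a, Set.left_mem_Icc.2 hab.le, rfl⟩)
  -- integral bound
  have hI : ∀ k : ℕ,
      |∫ τ in a..t, ((τ ^ ρ - a ^ ρ) / (t ^ ρ - a ^ ρ)) ^ k * x' τ| ≤ M * (t - a) := by
    intro k
    have hbd : ∀ τ ∈ Set.uIoc a t,
        ‖((τ ^ ρ - a ^ ρ) / (t ^ ρ - a ^ ρ)) ^ k * x' τ‖ ≤ M := by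
      intro τ hτ
      rw [Set.uIoc_of_le hat.le] at hτ
      obtain ⟨hτ1, hτ2⟩ := hτ
      have hτ0 : 0 ≤ τ := le_trans ha hτ1.le
      have h1 : a ^ ρ ≤ τ ^ ρ := Real.rpow_le_rpow ha hτ1.le hρ.le
      have h2 : τ ^ ρ ≤ t ^ ρ := Real.rpow_le_rpow hτ0 hτ2 hρ.le
      have hr0 : 0 ≤ (τ ^ ρ - a ^ ρ) / (t ^ ρ - a ^ ρ) := div_nonneg (by linarith) hS.le
      have hr1 : (τ ^ ρ - a ^ ρ) / (t ^ ρ - a ^ ρ) ≤ 1 := (div_le_one hS).2 (by linarith)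
      have hxM : |x' τ| ≤ M := hM.2 ⟨τ, ⟨hτ1.le, hτ2.trans htb⟩, rfl⟩
      rw [Real.norm_eq_abs, abs_mul, abs_pow, abs_of_nonneg hr0]
      calc ((τ ^ ρ - a ^ ρ) / (t ^ ρ - a ^ ρ)) ^ k * |x' τ| ≤ 1 * M := by
            apply mul_le_mul (pow_le_one₀ hr0 hr1) hxM (abs_nonneg _) zero_le_one
        _ = M := one_mul M
    have h := intervalIntegral.norm_integral_le_of_norm_le_const hbd
    rw [Real.norm_eq_abs, abs_of_pos hta] at h
    exact h
  -- coefficient bound specialized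
  set G := Real.exp (α ^ 2 + α) with hG
  have hGpos : 0 < G := Real.exp_pos _
  set base : ℕ → ℝ := fun j => ((N + 1 + j : ℕ) : ℝ) ^ (-(α + 1)) with hbase
  have hbase_nonneg : ∀ j, 0 ≤ base j := fun j => Real.rpow_nonneg (Nat.cast_nonneg _) _
  have hcoef : ∀ j : ℕ,
      |Real.Gamma (((N + 1 + j : ℕ) : ℝ) - α) /
        (Real.Gamma (-α) * (Nat.factorial (N + 1 + j) : ℝ))| ≤ G * base j := by
    intro j
    refine (coefBound α hα (N + 1 + j)).trans ?_
    apply mul_le_mul_of_nonneg_left ?_ hGpos.le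
    have hpos : (0:ℝ) < ((N + 1 + j : ℕ) : ℝ) := by positivity
    exact Real.rpow_le_rpow_of_nonpos hpos (by linarith) (by linarith)
  set T : ℕ → ℝ := fun j =>
    (Real.Gamma (((N + 1 + j : ℕ) : ℝ) - α) /
        (Real.Gamma (-α) * (Nat.factorial (N + 1 + j) : ℝ))) *
      ∫ τ in a..t, ((τ ^ ρ - a ^ ρ) / (t ^ ρ - a ^ ρ)) ^ (N + 1 + j) * x' τ with hT
  set C := G * (M * (t - a)) with hC
  have hC0 : 0 ≤ C := by positivity
  have hTb : ∀ j, |T j| ≤ C * base j := by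
    intro j
    rw [hT]
    simp only []
    rw [abs_mul]
    calc |Real.Gamma (((N + 1 + j : ℕ) : ℝ) - α) /
          (Real.Gamma (-α) * (Nat.factorial (N + 1 + j) : ℝ))| *
          |∫ τ in a..t, ((τ ^ ρ - a ^ ρ) / (t ^ ρ - a ^ ρ)) ^ (N + 1 + j) * x' τ|
        ≤ (G * base j) * (M * (t - a)) := by
          apply mul_le_mul (hcoef j) (hI (N + 1 + j)) (abs_nonneg _) (by positivity)
      _ = C * base j := by rw [hC]; ring
  have hpartial := tailBound α hα N hN
  have hsum_base : Summable base := summable_of_sum_range_le hbase_nonneg hpartial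
  have htsum_base : ∑' j, base j ≤ (N:ℝ) ^ (-α) / α :=
    Real.tsum_le_of_sum_range_le hbase_nonneg hpartial
  have hsum_b : Summable (fun j => C * base j) := hsum_base.mul_left C
  have habsT : Summable (fun j => |T j|) :=
    Summable.of_nonneg_of_le (fun j => abs_nonneg _) hTb hsum_b
  have hsumT : Summable T := Summable.of_abs habsT
  have hSig : |∑' j, T j| ≤ C * ((N:ℝ) ^ (-α) / α) := by
    have hnorm : Summable (fun j => ‖T j‖) := by
      simpa only [Real.norm_eq_abs] using habsT
    have h1 : |∑' j, T j| ≤ ∑' j, |T j| := by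
      have := norm_tsum_le_tsum_norm hnorm
      simpa only [Real.norm_eq_abs] using this
    have h2 : ∑' j, |T j| ≤ ∑' j, C * base j := Summable.tsum_le_tsum hTb habsT hsum_b
    have h3 : ∑' j, C * base j = C * ∑' j, base j := tsum_mul_left
    have h4 : C * ∑' j, base j ≤ C * ((N:ℝ) ^ (-α) / α) :=
      mul_le_mul_of_nonneg_left htsum_base hC0
    linarith
  -- assemble
  rw [hE N t]
  have hEeq : ρ ^ (-α) / Real.Gamma (α + 1) * (t ^ ρ - a ^ ρ) ^ α * ∑' j, T j =
      ρ ^ (-α) / Real.Gamma (α + 1) * (t ^ ρ - a ^ ρ) ^ α * ∑' j, T j := rfl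
  rw [show (∑' j : ℕ,
      (Real.Gamma (((N + 1 + j : ℕ) : ℝ) - α) /
          (Real.Gamma (-α) * (Nat.factorial (N + 1 + j) : ℝ))) *
        ∫ τ in a..t, ((τ ^ ρ - a ^ ρ) / (t ^ ρ - a ^ ρ)) ^ (N + 1 + j) * x' τ) =
      ∑' j, T j from rfl]
  rw [abs_mul, abs_mul, abs_of_pos (by positivity : (0:ℝ) < ρ ^ (-α) / Real.Gamma (α + 1)),
    abs_of_pos hSα]
  have hmain : ρ ^ (-α) / Real.Gamma (α + 1) * (t ^ ρ - a ^ ρ) ^ α * |∑' j, T j| ≤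
      ρ ^ (-α) / Real.Gamma (α + 1) * (t ^ ρ - a ^ ρ) ^ α * (C * ((N:ℝ) ^ (-α) / α)) :=
    mul_le_mul_of_nonneg_left hSig (by positivity)
  refine hmain.trans (le_of_eq ?_)
  rw [hC, hG, Real.rpow_neg (Nat.cast_nonneg N)]
  have hNα : (0:ℝ) < (N:ℝ) ^ α := Real.rpow_pos_of_pos (by positivity) _
  field_simp
end

section
/- Let $\alpha > 0$ and $N \in \mathbb{N}$ with $N \ge 1$. Then $\sum_{k=N+1}^{\infty} \left|\frac{\Gamma(k-\alpha)}{\Gamma(-\alpha)\, k!}\right| \le \frac{\exp(\alpha^2 + \alpha)}{\alpha N^\alpha}$. -/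
open Real

open Finset

lemma gamma_prod (α : ℝ) (hα' : ∀ n : ℕ, α ≠ n) :
    ∀ k : ℕ, Real.Gamma ((k : ℝ) - α) = Real.Gamma (-α) * ∏ j ∈ range k, ((j : ℝ) - α) := by
  intro k
  induction k with
  | zero => simp
  | succ n ih =>
      have h1 : ((n + 1 : ℕ) : ℝ) - α = ((n : ℝ) - α) + 1 := by push_cast; ring
      have h2 : (n : ℝ) - α ≠ 0 := sub_ne_zero.mpr (Ne.symm (hα' n))
      rw [h1, Real.Gamma_add_one h2, ih, prod_range_succ]
      ring

lemma term_eq (α : ℝ) (hα' : ∀ n : ℕ, α ≠ n) (k : ℕ) :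
    |Real.Gamma ((k : ℝ) - α) / (Real.Gamma (-α) * (Nat.factorial k : ℝ))| =
      ∏ j ∈ range k, (|(j : ℝ) - α| / ((j : ℝ) + 1)) := by
  have hG : Real.Gamma (-α) ≠ 0 := by
    apply Real.Gamma_ne_zero
    intro n h
    exact hα' n (by linarith [neg_injective h])
  have hfac : (Nat.factorial k : ℝ) = ∏ j ∈ range k, ((j : ℝ) + 1) := by
    rw [← Finset.prod_range_add_one_eq_factorial]
    push_cast
    rfl
  rw [gamma_prod α hα' k, hfac, mul_div_mul_left _ _ hG, abs_div, abs_prod]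
  rw [abs_of_nonneg (Finset.prod_nonneg (fun j _ => by positivity : ∀ j ∈ range k, (0:ℝ) ≤ (j:ℝ)+1))]
  rw [← Finset.prod_div_distrib]

lemma telescope : ∀ r : ℕ, ∏ j ∈ Ico 1 (r + 1), (((j : ℝ) + 1) / (j : ℝ)) = (r : ℝ) + 1 := by
  intro r
  induction r with
  | zero => simp
  | succ n ih =>
      rw [Finset.prod_Ico_succ_top (by omega), ih]
      have : ((n + 1 : ℕ) : ℝ) ≠ 0 := by positivity
      push_cast
      field_simp

lemma factor_eq (α : ℝ) (j : ℕ) (hj : 1 ≤ j) :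
    (|(j : ℝ) - α| / ((j : ℝ) + 1)) * ((((j : ℝ) + 1) / (j : ℝ)) ^ ((1 : ℝ) + α)) =
      (|(j : ℝ) - α| / (j : ℝ)) * ((((j : ℝ) + 1) / (j : ℝ)) ^ (α : ℝ)) := by
  have hj0 : (0 : ℝ) < (j : ℝ) := by exact_mod_cast hj
  have hb : (0 : ℝ) < ((j : ℝ) + 1) / (j : ℝ) := by positivity
  rw [show (1 : ℝ) + α = α + 1 by ring, Real.rpow_add_one (ne_of_gt hb)]
  field_simp

lemma factor_le_one (α : ℝ) (hα : 0 < α) (j : ℕ) (hj : 1 ≤ j) (h : α < (j : ℝ)) :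
    (|(j : ℝ) - α| / (j : ℝ)) * ((((j : ℝ) + 1) / (j : ℝ)) ^ (α : ℝ)) ≤ 1 := by
  have hj0 : (0 : ℝ) < (j : ℝ) := by exact_mod_cast hj
  have habs : |(j : ℝ) - α| = (j : ℝ) - α := abs_of_nonneg (by linarith)
  have h1 : ((j : ℝ) - α) / (j : ℝ) ≤ Real.exp (-(α / j)) := by
    have := Real.add_one_le_exp (-(α / (j : ℝ)))
    have e : ((j : ℝ) - α) / (j : ℝ) = -(α / j) + 1 := by field_simp; ring
    linarith [this, e.le]
  have h1' : (0 : ℝ) ≤ ((j : ℝ) - α) / (j : ℝ) := by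
    apply div_nonneg <;> linarith
  have h2 : (((j : ℝ) + 1) / (j : ℝ)) ^ (α : ℝ) ≤ Real.exp (α / j) := by
    have hb : ((j : ℝ) + 1) / (j : ℝ) ≤ Real.exp (1 / j) := by
      have := Real.add_one_le_exp (1 / (j : ℝ))
      have e : ((j : ℝ) + 1) / (j : ℝ) = 1 / (j : ℝ) + 1 := by field_simp; ring
      linarith
    calc (((j : ℝ) + 1) / (j : ℝ)) ^ (α : ℝ) ≤ (Real.exp (1 / j)) ^ (α : ℝ) :=
          Real.rpow_le_rpow (by positivity) hb hα.le
      _ = Real.exp (1 / j * α) := (Real.exp_mul _ _).symm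
      _ = Real.exp (α / j) := by rw [one_div, inv_mul_eq_div]
  rw [habs]
  calc ((j : ℝ) - α) / (j : ℝ) * ((((j : ℝ) + 1) / (j : ℝ)) ^ (α : ℝ))
      ≤ Real.exp (-(α / j)) * Real.exp (α / j) :=
        mul_le_mul h1 h2 (by positivity) (Real.exp_nonneg _)
    _ = 1 := by rw [← Real.exp_add]; simp

lemma choose_le_two_pow' (m s : ℕ) : m.choose s ≤ 2 ^ m := by
  rcases le_or_gt s m with h | h
  · calc m.choose s ≤ ∑ i ∈ range (m + 1), m.choose i :=
        Finset.single_le_sum (fun i _ => Nat.zero_le _) (by simp [Finset.mem_range]; omega)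
      _ = 2 ^ m := Nat.sum_range_choose m
  · rw [Nat.choose_eq_zero_of_lt h]; exact Nat.zero_le _

lemma small_prod_bound (α : ℝ) (hα : 0 < α) (s : ℕ) (hs : s ≤ ⌊α⌋₊) :
    ∏ j ∈ Ico 1 (s + 1), ((α - (j : ℝ)) / (j : ℝ)) ≤ (2 : ℝ) ^ (⌊α⌋₊ : ℕ) := by
  set m := ⌊α⌋₊ with hm
  have hαm : α < (m : ℝ) + 1 := by exact_mod_cast Nat.lt_floor_add_one α
  have step1 : ∏ j ∈ Ico 1 (s + 1), ((α - (j : ℝ)) / (j : ℝ)) ≤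
      ∏ j ∈ Ico 1 (s + 1), (((m + 1 - j : ℕ) : ℝ) / (j : ℝ)) := by
    apply Finset.prod_le_prod
    · intro j hj
      simp only [Finset.mem_Ico] at hj
      have h1 : 1 ≤ j := hj.1
      have h2 : j ≤ m := by omega
      have hjα : (j : ℝ) ≤ α := le_trans (by exact_mod_cast h2) (Nat.floor_le hα.le)
      have hj0 : (0 : ℝ) < (j : ℝ) := by exact_mod_cast h1
      apply div_nonneg (by linarith) hj0.le
    · intro j hj
      simp only [Finset.mem_Ico] at hj
      have h1 : 1 ≤ j := hj.1
      have h2 : j ≤ m := by omega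
      have hj0 : (0 : ℝ) < (j : ℝ) := by exact_mod_cast h1
      have hcast : ((m + 1 - j : ℕ) : ℝ) = (m : ℝ) + 1 - (j : ℝ) := by
        have : j ≤ m + 1 := by omega
        push_cast [Nat.cast_sub this]
        ring
      rw [div_le_div_iff_of_pos_right hj0, hcast]
      linarith
  have num : ∏ j ∈ Ico 1 (s + 1), ((m + 1 - j : ℕ)) = m.descFactorial s := by
    rw [Finset.prod_Ico_eq_prod_range, Nat.descFactorial_eq_prod_range]
    apply Finset.prod_congr (by simp)
    intro i _
    omega
  have den : ∏ j ∈ Ico 1 (s + 1), (j : ℕ) = s.factorial := by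
    rw [Finset.prod_Ico_eq_prod_range, ← Finset.prod_range_add_one_eq_factorial]
    apply Finset.prod_congr (by simp)
    intro i _
    omega
  have step2 : ∏ j ∈ Ico 1 (s + 1), (((m + 1 - j : ℕ) : ℝ) / (j : ℝ)) =
      ((m.choose s : ℕ) : ℝ) := by
    rw [Finset.prod_div_distrib]
    rw [show (fun j : ℕ => ((m + 1 - j : ℕ) : ℝ)) = fun j : ℕ => ((m + 1 - j : ℕ) : ℝ) from rfl]
    rw [← Nat.cast_prod, ← Nat.cast_prod, num, den,
      Nat.descFactorial_eq_factorial_mul_choose]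
    rw [Nat.cast_mul, mul_comm, mul_div_assoc,
      div_self (by exact_mod_cast s.factorial_ne_zero), mul_one]
  calc ∏ j ∈ Ico 1 (s + 1), ((α - (j : ℝ)) / (j : ℝ)) ≤ ((m.choose s : ℕ) : ℝ) := by
        rw [← step2]; exact step1
    _ ≤ (2 : ℝ) ^ (m : ℕ) := by exact_mod_cast choose_le_two_pow' m s

lemma final_num (α : ℝ) (hα : 0 < α) :
    α * ((2 : ℝ) ^ (α : ℝ) * (α + 1) ^ (α : ℝ)) ≤ Real.exp (α ^ 2 + α) := by
  have h2 : (2 : ℝ) ^ (α : ℝ) = Real.exp (Real.log 2 * α) :=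
    Real.rpow_def_of_pos (by norm_num) α
  have h3 : (α + 1) ^ (α : ℝ) = Real.exp (Real.log (α + 1) * α) :=
    Real.rpow_def_of_pos (by linarith) α
  have h1 : α = Real.exp (Real.log α) := (Real.exp_log hα).symm
  rw [h2, h3]
  nth_rewrite 1 [h1]
  rw [← Real.exp_add, ← Real.exp_add, Real.exp_le_exp]
  have hlog2 : Real.log 2 < 0.6931471808 := Real.log_two_lt_d9
  have hlog2' : (0 : ℝ) < Real.log 2 := Real.log_pos (by norm_num)
  rcases le_or_gt α 1 with hcase | hcase
  · have e1 : Real.log α ≤ α - 1 := Real.log_le_sub_one_of_pos hα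
    have e2 : Real.log (α + 1) ≤ α := by
      have := Real.log_le_sub_one_of_pos (show (0:ℝ) < α + 1 by linarith)
      linarith
    have p1 : Real.log 2 * α ≤ 0.6931471808 * α :=
      mul_le_mul_of_nonneg_right hlog2.le hα.le
    have p2 : Real.log (α + 1) * α ≤ α * α := mul_le_mul_of_nonneg_right e2 hα.le
    nlinarith
  · set u := Real.sqrt α with hu
    have hu2 : u ^ 2 = α := Real.sq_sqrt hα.le
    have hu1 : 1 ≤ u := by
      rw [hu]
      exact Real.one_le_sqrt.mpr hcase.le
    have hlogu : Real.log u ≤ u - 1 := Real.log_le_sub_one_of_pos (by linarith)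
    have e1 : Real.log α = 2 * Real.log u := by
      rw [← hu2, Real.log_pow]
      push_cast
      ring
    have e2 : Real.log (α + 1) ≤ Real.log 2 + Real.log α := by
      have h2a : α + 1 ≤ 2 * α := by linarith
      calc Real.log (α + 1) ≤ Real.log (2 * α) :=
            Real.log_le_log (by linarith) h2a
        _ = Real.log 2 + Real.log α := Real.log_mul (by norm_num) hα.ne'
    have hα0 : (0 : ℝ) ≤ α := hα.le
    have e3 : Real.log (α + 1) ≤ 0.6931471808 + 2 * (u - 1) := by
      rw [e1] at e2
      linarith
    have p2 : Real.log (α + 1) * α ≤ (0.6931471808 + 2 * (u - 1)) * α :=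
      mul_le_mul_of_nonneg_right e3 hα0
    have p1 : Real.log 2 * α ≤ 0.6931471808 * α :=
      mul_le_mul_of_nonneg_right hlog2.le hα0
    have e4 : Real.log α ≤ 2 * (u - 1) := by rw [e1]; linarith
    nlinarith [sq_nonneg (u * (u - 1)), sq_nonneg (u - 2), sq_nonneg u, hu2, hu1]

lemma core (α : ℝ) (hα : 0 < α) (r : ℕ) :
    α * ∏ j ∈ Ico 1 (r + 1), (|(j : ℝ) - α| / ((j : ℝ) + 1)) ≤
      Real.exp (α ^ 2 + α) * ((r : ℝ) + 1) ^ (-(1 : ℝ) - α) := by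
  have hX : (0 : ℝ) < (r : ℝ) + 1 := by positivity
  set m := ⌊α⌋₊ with hm
  set s := min r m with hs
  have hαm : α < (m : ℝ) + 1 := by exact_mod_cast Nat.lt_floor_add_one α
  have hmα : (m : ℝ) ≤ α := Nat.floor_le hα.le
  have key : α * (∏ j ∈ Ico 1 (r + 1), (|(j : ℝ) - α| / ((j : ℝ) + 1))) *
      ((r : ℝ) + 1) ^ ((1 : ℝ) + α) ≤ Real.exp (α ^ 2 + α) := by
    have hXpow : ((r : ℝ) + 1) ^ ((1 : ℝ) + α) =
        ∏ j ∈ Ico 1 (r + 1), ((((j : ℝ) + 1) / (j : ℝ)) ^ ((1 : ℝ) + α)) := by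
      rw [← telescope r]
      exact (Real.finset_prod_rpow _ _ (fun i hi => by
        have h1 : 1 ≤ i := (Finset.mem_Ico.mp hi).1
        have : (0:ℝ) < (i:ℝ) := by exact_mod_cast h1
        positivity) _).symm
    rw [hXpow, mul_assoc, ← Finset.prod_mul_distrib]
    have hprod_eq : ∏ j ∈ Ico 1 (r + 1),
        ((|(j : ℝ) - α| / ((j : ℝ) + 1)) * ((((j : ℝ) + 1) / (j : ℝ)) ^ ((1 : ℝ) + α))) =
        ∏ j ∈ Ico 1 (r + 1), ((|(j : ℝ) - α| / (j : ℝ)) * ((((j : ℝ) + 1) / (j : ℝ)) ^ (α : ℝ))) :=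
      Finset.prod_congr rfl (fun j hj => factor_eq α j (Finset.mem_Ico.mp hj).1)
    rw [hprod_eq]
    have hsplit : ∏ j ∈ Ico 1 (r + 1),
        ((|(j : ℝ) - α| / (j : ℝ)) * ((((j : ℝ) + 1) / (j : ℝ)) ^ (α : ℝ))) =
        (∏ j ∈ Ico 1 (s + 1), ((|(j : ℝ) - α| / (j : ℝ)) * ((((j : ℝ) + 1) / (j : ℝ)) ^ (α : ℝ)))) *
        ∏ j ∈ Ico (s + 1) (r + 1), ((|(j : ℝ) - α| / (j : ℝ)) * ((((j : ℝ) + 1) / (j : ℝ)) ^ (α : ℝ))) :=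
      (Finset.prod_Ico_consecutive _ (by omega) (by omega)).symm
    have hnn : ∀ j ∈ Ico 1 (s + 1),
        (0:ℝ) ≤ (|(j : ℝ) - α| / (j : ℝ)) * ((((j : ℝ) + 1) / (j : ℝ)) ^ (α : ℝ)) := by
      intro j hj
      have h1 : 1 ≤ j := (Finset.mem_Ico.mp hj).1
      have : (0:ℝ) < (j:ℝ) := by exact_mod_cast h1
      positivity
    have bound2 : ∏ j ∈ Ico (s + 1) (r + 1),
        ((|(j : ℝ) - α| / (j : ℝ)) * ((((j : ℝ) + 1) / (j : ℝ)) ^ (α : ℝ))) ≤ 1 := by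
      apply Finset.prod_le_one
      · intro j hj
        have h1 : s + 1 ≤ j := (Finset.mem_Ico.mp hj).1
        have : (0:ℝ) < (j:ℝ) := by
          have : 1 ≤ j := by omega
          exact_mod_cast this
        positivity
      · intro j hj
        rcases Finset.mem_Ico.mp hj with ⟨h1, h2⟩
        have hmj : m < j := by omega
        have hαj : α < (j : ℝ) := lt_of_lt_of_le hαm (by exact_mod_cast hmj)
        exact factor_le_one α hα j (by omega) hαj
    have bound1 : ∏ j ∈ Ico 1 (s + 1),
        ((|(j : ℝ) - α| / (j : ℝ)) * ((((j : ℝ) + 1) / (j : ℝ)) ^ (α : ℝ))) ≤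
        (2 : ℝ) ^ (m : ℕ) * ((s : ℝ) + 1) ^ (α : ℝ) := by
      have heq : ∏ j ∈ Ico 1 (s + 1),
          ((|(j : ℝ) - α| / (j : ℝ)) * ((((j : ℝ) + 1) / (j : ℝ)) ^ (α : ℝ))) =
          (∏ j ∈ Ico 1 (s + 1), ((α - (j : ℝ)) / (j : ℝ))) *
          ∏ j ∈ Ico 1 (s + 1), ((((j : ℝ) + 1) / (j : ℝ)) ^ (α : ℝ)) := by
        rw [← Finset.prod_mul_distrib]
        apply Finset.prod_congr rfl
        intro j hj
        rcases Finset.mem_Ico.mp hj with ⟨h1, h2⟩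
        have hjm : j ≤ m := by omega
        have hjα : (j : ℝ) ≤ α := le_trans (by exact_mod_cast hjm) hmα
        rw [abs_of_nonpos (by linarith), neg_sub]
      have htel : ∏ j ∈ Ico 1 (s + 1), ((((j : ℝ) + 1) / (j : ℝ)) ^ (α : ℝ)) =
          ((s : ℝ) + 1) ^ (α : ℝ) := by
        rw [Real.finset_prod_rpow _ _ (fun i hi => by
          have h1 : 1 ≤ i := (Finset.mem_Ico.mp hi).1
          have : (0:ℝ) < (i:ℝ) := by exact_mod_cast h1
          positivity) _, telescope s]
      rw [heq, htel]
      exact mul_le_mul_of_nonneg_right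
        (small_prod_bound α hα s (min_le_right r m)) (Real.rpow_nonneg (by positivity) _)
    calc α * ∏ j ∈ Ico 1 (r + 1),
          ((|(j : ℝ) - α| / (j : ℝ)) * ((((j : ℝ) + 1) / (j : ℝ)) ^ (α : ℝ)))
        ≤ α * ((2 : ℝ) ^ (m : ℕ) * ((s : ℝ) + 1) ^ (α : ℝ)) := by
          apply mul_le_mul_of_nonneg_left _ hα.le
          rw [hsplit]
          calc (∏ j ∈ Ico 1 (s + 1), _) * (∏ j ∈ Ico (s + 1) (r + 1), _)
              ≤ (∏ j ∈ Ico 1 (s + 1),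
                  ((|(j : ℝ) - α| / (j : ℝ)) * ((((j : ℝ) + 1) / (j : ℝ)) ^ (α : ℝ)))) * 1 :=
                mul_le_mul_of_nonneg_left bound2 (Finset.prod_nonneg hnn)
            _ = _ := mul_one _
            _ ≤ _ := bound1
      _ ≤ α * ((2 : ℝ) ^ (α : ℝ) * (α + 1) ^ (α : ℝ)) := by
          apply mul_le_mul_of_nonneg_left _ hα.le
          apply mul_le_mul
          · rw [← Real.rpow_natCast 2 m]
            exact Real.rpow_le_rpow_of_exponent_le one_le_two hmα
          · apply Real.rpow_le_rpow (by positivity) _ hα.le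
            have hsm : (s : ℝ) ≤ (m : ℝ) := by exact_mod_cast min_le_right r m
            linarith
          · positivity
          · positivity
      _ ≤ Real.exp (α ^ 2 + α) := final_num α hα
  have hrw : ((r : ℝ) + 1) ^ (-(1 : ℝ) - α) = (((r : ℝ) + 1) ^ ((1 : ℝ) + α))⁻¹ := by
    rw [show -(1:ℝ) - α = -((1:ℝ) + α) by ring, Real.rpow_neg hX.le]
  rw [hrw, ← div_eq_mul_inv, le_div_iff₀ (Real.rpow_pos_of_pos hX _)]
  exact key

lemma stepC (α : ℝ) (hα : 0 < α) (k : ℕ) (hk : 1 ≤ k) :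
    α * (((k + 1 : ℕ) : ℝ)) ^ (-(1 : ℝ) - α) ≤
      ((k : ℕ) : ℝ) ^ (-α : ℝ) - ((k + 1 : ℕ) : ℝ) ^ (-α : ℝ) := by
  have ha : (0 : ℝ) < (k : ℝ) := by exact_mod_cast hk
  have hcast : ((k + 1 : ℕ) : ℝ) = (k : ℝ) + 1 := by push_cast; ring
  rw [hcast]
  set a : ℝ := (k : ℝ) with hadef
  set b : ℝ := a + 1 with hbdef
  have hb : (0 : ℝ) < b := by simp [hbdef]; linarith
  set A : ℝ := a ^ (α : ℝ) with hA
  set B : ℝ := b ^ (α : ℝ) with hB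
  have hApos : 0 < A := Real.rpow_pos_of_pos ha _
  have hBpos : 0 < B := Real.rpow_pos_of_pos hb _
  have key : (1 + α / b) * A ≤ B := by
    have hab : a / b ≤ Real.exp (-(1 / b)) := by
      have h0 := Real.add_one_le_exp (-(1 / b))
      have e : a / b = -(1 / b) + 1 := by
        rw [hbdef]; field_simp; ring
      linarith [e.le]
    have h1 : A = B * ((a / b) ^ (α : ℝ)) := by
      rw [hA, hB, ← Real.mul_rpow hb.le (by positivity)]
      congr 1
      field_simp
    have h2 : (a / b) ^ (α : ℝ) ≤ Real.exp (-(α / b)) := by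
      calc (a / b) ^ (α : ℝ) ≤ (Real.exp (-(1 / b))) ^ (α : ℝ) :=
            Real.rpow_le_rpow (by positivity) hab hα.le
        _ = Real.exp (-(1 / b) * α) := (Real.exp_mul _ _).symm
        _ = Real.exp (-(α / b)) := by congr 1; field_simp
    have h3 : 1 + α / b ≤ Real.exp (α / b) := by
      have := Real.add_one_le_exp (α / b)
      linarith
    calc (1 + α / b) * A = (1 + α / b) * (B * ((a / b) ^ (α : ℝ))) := by rw [← h1]
      _ ≤ Real.exp (α / b) * (B * Real.exp (-(α / b))) := by
          apply mul_le_mul h3 _ (by positivity) (Real.exp_nonneg _)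
          exact mul_le_mul_of_nonneg_left h2 hBpos.le
      _ = B * (Real.exp (α / b) * Real.exp (-(α / b))) := by ring
      _ = B := by rw [← Real.exp_add]; simp
  have hbpow : b ^ (-(1 : ℝ) - α) = (b * B)⁻¹ := by
    rw [show -(1 : ℝ) - α = -((1 : ℝ) + α) by ring, Real.rpow_neg hb.le]
    congr 1
    rw [show (1 : ℝ) + α = α + 1 by ring, Real.rpow_add_one hb.ne']
    rw [hB]; ring
  have hneg : a ^ (-α : ℝ) = A⁻¹ := by rw [Real.rpow_neg ha.le, hA]
  have hnegb : b ^ (-α : ℝ) = B⁻¹ := by rw [Real.rpow_neg hb.le, hB]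
  rw [hbpow, hneg, hnegb]
  have expand : A⁻¹ - B⁻¹ = (B - A) / (A * B) := by field_simp
  rw [expand, ← div_eq_mul_inv, div_le_div_iff₀ (by positivity) (by positivity)]
  have k2 : α * A ≤ b * (B - A) := by
    have h4 := mul_le_mul_of_nonneg_right key hb.le
    have e : (1 + α / b) * A * b = A * b + α * A := by field_simp
    nlinarith
  nlinarith [mul_le_mul_of_nonneg_right k2 hBpos.le]


theorem gamma_ratio_tail_sum_bound (α : ℝ) (hα : 0 < α) (hα' : ∀ n : ℕ, α ≠ n)
    (N : ℕ) (hN : 1 ≤ N) :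
    ∑' j : ℕ,
        |Real.Gamma (((N + 1 + j : ℕ) : ℝ) - α) /
            (Real.Gamma (-α) * (Nat.factorial (N + 1 + j) : ℝ))| ≤
      Real.exp (α ^ 2 + α) / (α * (N : ℝ) ^ α) := by
  set E : ℝ := Real.exp (α ^ 2 + α) with hE
  have hEpos : 0 < E := Real.exp_pos _
  set g : ℕ → ℝ := fun i => ((N + i : ℕ) : ℝ) ^ (-α : ℝ) with hg
  have hterm : ∀ i : ℕ,
      |Real.Gamma (((N + 1 + i : ℕ) : ℝ) - α) /
          (Real.Gamma (-α) * (Nat.factorial (N + 1 + i) : ℝ))| ≤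
        (E / α) * (g i - g (i + 1)) := by
    intro i
    rw [term_eq α hα' (N + 1 + i)]
    have hidx : N + 1 + i = (N + i) + 1 := by omega
    rw [hidx]
    have hsplit : ∏ j ∈ range ((N + i) + 1), (|(j : ℝ) - α| / ((j : ℝ) + 1)) =
        α * ∏ j ∈ Ico 1 ((N + i) + 1), (|(j : ℝ) - α| / ((j : ℝ) + 1)) := by
      rw [Finset.range_eq_Ico, Finset.prod_eq_prod_Ico_succ_bot (by omega : 0 < (N + i) + 1)]
      norm_num [abs_of_pos hα]
    rw [hsplit]
    have h1 := core α hα (N + i)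
    have h2 := stepC α hα (N + i) (by omega)
    have hc1 : ((N + i : ℕ) : ℝ) + 1 = ((N + i + 1 : ℕ) : ℝ) := by push_cast; ring
    rw [hc1] at h1
    have hgi : g i = ((N + i : ℕ) : ℝ) ^ (-α : ℝ) := rfl
    have hgi1 : g (i + 1) = ((N + i + 1 : ℕ) : ℝ) ^ (-α : ℝ) := rfl
    calc α * ∏ j ∈ Ico 1 ((N + i) + 1), (|(j : ℝ) - α| / ((j : ℝ) + 1))
        ≤ E * ((N + i + 1 : ℕ) : ℝ) ^ (-(1 : ℝ) - α) := h1
      _ = (E / α) * (α * ((N + i + 1 : ℕ) : ℝ) ^ (-(1 : ℝ) - α)) := by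
          field_simp
      _ ≤ (E / α) * (g i - g (i + 1)) := by
          apply mul_le_mul_of_nonneg_left _ (by positivity)
          rw [hgi, hgi1]
          exact h2
  apply Real.tsum_le_of_sum_range_le (fun n => abs_nonneg _)
  intro n
  calc ∑ i ∈ range n,
        |Real.Gamma (((N + 1 + i : ℕ) : ℝ) - α) /
            (Real.Gamma (-α) * (Nat.factorial (N + 1 + i) : ℝ))|
      ≤ ∑ i ∈ range n, (E / α) * (g i - g (i + 1)) :=
        Finset.sum_le_sum (fun i _ => hterm i)
    _ = (E / α) * ∑ i ∈ range n, (g i - g (i + 1)) := (Finset.mul_sum _ _ _).symm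
    _ = (E / α) * (g 0 - g n) := by rw [Finset.sum_range_sub' g n]
    _ ≤ (E / α) * g 0 := by
        apply mul_le_mul_of_nonneg_left _ (by positivity)
        have : (0 : ℝ) ≤ g n := Real.rpow_nonneg (by positivity) _
        linarith
    _ = E / (α * (N : ℝ) ^ (α : ℝ)) := by
        have : g 0 = ((N : ℝ) ^ (α : ℝ))⁻¹ := by
          rw [hg]
          simp only [Nat.add_zero]
          rw [Real.rpow_neg (by positivity)]
        rw [this]
        ring
end

section
/- Let $\alpha > 0$ (not an integer) and $k \in \mathbb{N}$ with $k \ge 1$. Then $\left|\frac{\Gamma(k-\alpha)}{\Gamma(-\alpha)\, k!}\right| \le \frac{\exp(\alpha^2 + \alpha)}{k^{\alpha+1}}$. -/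
open Real

private lemma gamma_prod_aux (α : ℝ) (hα' : ∀ n : ℕ, α ≠ n) (k : ℕ) :
    Real.Gamma ((k : ℝ) - α) = (∏ j ∈ Finset.range k, ((j : ℝ) - α)) * Real.Gamma (-α) := by
  induction k with
  | zero => simp
  | succ n ih =>
    have hne : (n : ℝ) - α ≠ 0 := by
      intro h
      exact hα' n (sub_eq_zero.mp h).symm
    have h1 : ((n + 1 : ℕ) : ℝ) - α = ((n : ℝ) - α) + 1 := by push_cast; ring
    rw [h1, Real.Gamma_add_one hne, ih, Finset.prod_range_succ]
    ring

private lemma prod_abs_le_pow (α : ℝ) (k : ℕ) (hkα : (k : ℝ) < α + 1) :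
    ∏ j ∈ Finset.range k, |(j : ℝ) - α| ≤ α ^ k := by
  calc ∏ j ∈ Finset.range k, |(j : ℝ) - α|
      ≤ ∏ _j ∈ Finset.range k, α := by
        apply Finset.prod_le_prod (fun _ _ => abs_nonneg _)
        intro j hj
        have h1 : (j : ℝ) + 1 ≤ (k : ℝ) := by exact_mod_cast Finset.mem_range.mp hj
        have hj' : (j : ℝ) < α := by linarith
        rw [abs_of_nonpos (by linarith)]
        linarith
    _ = α ^ k := by simp

private lemma key_ineq (α : ℝ) (hα : 0 < α) (k : ℕ) (hk : 1 ≤ k) (hkα : (k : ℝ) < α + 1) :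
    α ^ k * (k : ℝ) ^ (α + 1) ≤ (Nat.factorial k : ℝ) * Real.exp (α ^ 2 + α) := by
  rcases eq_or_lt_of_le hk with h1 | h2
  · -- k = 1
    subst h1
    simp only [pow_one, Nat.cast_one, Real.one_rpow, Nat.factorial_one, mul_one, one_mul]
    have h3 : α + 1 ≤ Real.exp α := Real.add_one_le_exp α
    have h4 : Real.exp α ≤ Real.exp (α ^ 2 + α) := by
      apply Real.exp_le_exp.mpr
      nlinarith
    linarith
  · -- k ≥ 2
    have hk2 : (2 : ℝ) ≤ (k : ℝ) := by exact_mod_cast h2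
    have hα1 : 1 < α := by linarith
    have hkpos : (0 : ℝ) < (k : ℝ) := by linarith
    set a := Real.log α with ha_def
    set b := Real.log (k : ℝ) with hb_def
    have ha : a ≤ α - 1 := Real.log_le_sub_one_of_pos hα
    have hb0 : 0 ≤ b := Real.log_nonneg (by linarith)
    have hb : b ≤ a + 1 := by
      have h2a : (k : ℝ) ≤ 2 * α := by linarith
      have := Real.log_le_log hkpos h2a
      rw [Real.log_mul (by norm_num) (ne_of_gt hα)] at this
      have hlog2 : Real.log 2 ≤ 1 := by
        have := Real.log_le_sub_one_of_pos (by norm_num : (0:ℝ) < 2)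
        linarith
      linarith
    -- k^k ≤ e^k * k!
    have hfact : ((k : ℝ)) ^ k ≤ (Nat.factorial k : ℝ) * Real.exp (k : ℝ) := by
      have := Real.pow_div_factorial_le_exp ((k:ℝ)) (le_of_lt hkpos) k
      rw [div_le_iff₀ (by positivity : (0:ℝ) < (Nat.factorial k : ℝ))] at this
      calc ((k:ℝ)) ^ k ≤ Real.exp (k:ℝ) * (Nat.factorial k : ℝ) := this
        _ = (Nat.factorial k : ℝ) * Real.exp (k : ℝ) := by ring
    -- the log inequality
    have hlogineq : (k : ℝ) * a + (α + 1) * b ≤ (k : ℝ) * b - (k : ℝ) + (α ^ 2 + α) := by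
      have hd : (0 : ℝ) ≤ α + 1 - (k : ℝ) := by linarith
      have hprod1 : 0 ≤ (α + 1 - (k : ℝ)) * (a - b + 1) := mul_nonneg hd (by linarith)
      have hprod2 : (α + 1) * (a + 1) ≤ (α + 1) * α :=
        mul_le_mul_of_nonneg_left (by linarith) (by linarith)
      nlinarith [hprod1, hprod2]
    -- convert to multiplicative
    have e1 : α ^ k = Real.exp ((k : ℝ) * a) := by
      rw [ha_def, ← Real.log_pow, Real.exp_log (pow_pos hα k)]
    have e2 : (k : ℝ) ^ (α + 1) = Real.exp ((α + 1) * b) := by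
      rw [hb_def, Real.rpow_def_of_pos hkpos, mul_comm]
    have e3 : ((k : ℝ)) ^ k = Real.exp ((k : ℝ) * b) := by
      rw [hb_def, ← Real.log_pow, Real.exp_log (pow_pos hkpos k)]
    calc α ^ k * (k : ℝ) ^ (α + 1) = Real.exp ((k : ℝ) * a + (α + 1) * b) := by
          rw [e1, e2, Real.exp_add]
      _ ≤ Real.exp ((k : ℝ) * b - (k : ℝ) + (α ^ 2 + α)) := Real.exp_le_exp.mpr hlogineq
      _ = ((k : ℝ)) ^ k * Real.exp (-(k : ℝ)) * Real.exp (α ^ 2 + α) := by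
          rw [e3, ← Real.exp_add, ← Real.exp_add]
          ring_nf
      _ ≤ (Nat.factorial k : ℝ) * Real.exp (k : ℝ) * Real.exp (-(k : ℝ)) * Real.exp (α ^ 2 + α) := by
          gcongr
      _ = (Nat.factorial k : ℝ) * Real.exp (α ^ 2 + α) := by
          rw [mul_assoc ((Nat.factorial k : ℝ)), ← Real.exp_add]
          simp

private lemma direct_bound (α : ℝ) (hα : 0 < α) (k : ℕ) (hk : 1 ≤ k) (hkα : (k : ℝ) < α + 1) :
    (∏ j ∈ Finset.range k, |(j : ℝ) - α|) / (Nat.factorial k : ℝ) ≤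
      Real.exp (α ^ 2 + α) / (k : ℝ) ^ (α + 1) := by
  have hkpos : (0 : ℝ) < (k : ℝ) := by exact_mod_cast hk
  rw [div_le_div_iff₀ (by positivity) (Real.rpow_pos_of_pos hkpos _)]
  calc (∏ j ∈ Finset.range k, |(j : ℝ) - α|) * (k : ℝ) ^ (α + 1)
      ≤ α ^ k * (k : ℝ) ^ (α + 1) := by
        apply mul_le_mul_of_nonneg_right (prod_abs_le_pow α k hkα)
        exact le_of_lt (Real.rpow_pos_of_pos hkpos _)
    _ ≤ (Nat.factorial k : ℝ) * Real.exp (α ^ 2 + α) := key_ineq α hα k hk hkα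
    _ = Real.exp (α ^ 2 + α) * (Nat.factorial k : ℝ) := by ring

private lemma prod_bound (α : ℝ) (hα : 0 < α) :
    ∀ k : ℕ, 1 ≤ k → (∏ j ∈ Finset.range k, |(j : ℝ) - α|) / (Nat.factorial k : ℝ) ≤
      Real.exp (α ^ 2 + α) / (k : ℝ) ^ (α + 1) := by
  refine Nat.le_induction ?_ ?_
  · exact direct_bound α hα 1 le_rfl (by norm_num; linarith)
  · intro n hn ih
    rcases lt_or_ge (n : ℝ) α with hcase | hcase
    · exact direct_bound α hα (n + 1) (by omega) (by push_cast; linarith)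
    · -- step case: α ≤ n
      have hnpos : (0 : ℝ) < (n : ℝ) := by
        have : (1:ℝ) ≤ (n:ℝ) := by exact_mod_cast hn
        linarith
      have hn1 : (0 : ℝ) < (n : ℝ) + 1 := by linarith
      have habs : |((n : ℕ) : ℝ) - α| = (n : ℝ) - α := abs_of_nonneg (by linarith)
      have hsplit : (∏ j ∈ Finset.range (n + 1), |(j : ℝ) - α|) / (Nat.factorial (n+1) : ℝ)
          = ((∏ j ∈ Finset.range n, |(j : ℝ) - α|) / (Nat.factorial n : ℝ)) *
            (((n : ℝ) - α) / ((n : ℝ) + 1)) := by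
        rw [Finset.prod_range_succ, habs, Nat.factorial_succ, div_mul_div_comm]
        push_cast
        rw [mul_comm ((n : ℝ) + 1) ((Nat.factorial n : ℝ))]
      have hbern : ((n : ℝ) - α) / ((n : ℝ) + 1) ≤ ((n : ℝ) / ((n : ℝ) + 1)) ^ (α + 1) := by
        have hs : (-1 : ℝ) ≤ -(1 / ((n : ℝ) + 1)) := by
          rw [neg_le_neg_iff]
          rw [div_le_one hn1]
          linarith
        have hp : (1 : ℝ) ≤ α + 1 := by linarith
        have := one_add_mul_self_le_rpow_one_add hs hp
        have he : (1 : ℝ) + -(1 / ((n : ℝ) + 1)) = (n : ℝ) / ((n : ℝ) + 1) := by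
          field_simp
          ring
        rw [he] at this
        have he2 : (1 : ℝ) + (α + 1) * -(1 / ((n : ℝ) + 1)) = ((n : ℝ) - α) / ((n : ℝ) + 1) := by
          field_simp
          ring
        rw [he2] at this
        exact this
      have hdiv : ((n : ℝ) / ((n : ℝ) + 1)) ^ (α + 1)
          = (n : ℝ) ^ (α + 1) / ((n : ℝ) + 1) ^ (α + 1) :=
        Real.div_rpow (le_of_lt hnpos) (le_of_lt hn1) _
      rw [hsplit]
      have hIH := ih
      have hnonneg1 : (0:ℝ) ≤ (∏ j ∈ Finset.range n, |(j : ℝ) - α|) / (Nat.factorial n : ℝ) := by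
        positivity
      have hnonneg2 : (0:ℝ) ≤ ((n : ℝ) - α) / ((n : ℝ) + 1) := by
        apply div_nonneg (by linarith) (by linarith)
      calc ((∏ j ∈ Finset.range n, |(j : ℝ) - α|) / (Nat.factorial n : ℝ)) *
            (((n : ℝ) - α) / ((n : ℝ) + 1))
          ≤ (Real.exp (α ^ 2 + α) / (n : ℝ) ^ (α + 1)) * (((n : ℝ) / ((n : ℝ) + 1)) ^ (α + 1)) :=
            mul_le_mul hIH hbern hnonneg2 (by positivity)
        _ = Real.exp (α ^ 2 + α) / ((n : ℝ) + 1) ^ (α + 1) := by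
            rw [hdiv]
            have h1 : (n : ℝ) ^ (α + 1) ≠ 0 := ne_of_gt (Real.rpow_pos_of_pos hnpos _)
            field_simp
        _ = Real.exp (α ^ 2 + α) / ((n + 1 : ℕ) : ℝ) ^ (α + 1) := by push_cast; ring_nf

theorem gamma_ratio_term_bound (α : ℝ) (hα : 0 < α) (hα' : ∀ n : ℕ, α ≠ n)
    (k : ℕ) (hk : 1 ≤ k) :
    |Real.Gamma ((k : ℝ) - α) / (Real.Gamma (-α) * (Nat.factorial k : ℝ))| ≤
      Real.exp (α ^ 2 + α) / (k : ℝ) ^ (α + 1) := by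
  have hΓ : Real.Gamma (-α) ≠ 0 := by
    apply Real.Gamma_ne_zero
    intro m h
    exact hα' m (by linarith [neg_injective h])
  have hfact : (Nat.factorial k : ℝ) ≠ 0 := by positivity
  have heq : |Real.Gamma ((k : ℝ) - α) / (Real.Gamma (-α) * (Nat.factorial k : ℝ))|
      = (∏ j ∈ Finset.range k, |(j : ℝ) - α|) / (Nat.factorial k : ℝ) := by
    rw [gamma_prod_aux α hα' k]
    rw [abs_div, abs_mul, abs_mul]
    rw [Finset.abs_prod]
    rw [abs_of_nonneg (by positivity : (0:ℝ) ≤ (Nat.factorial k : ℝ))]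
    rw [mul_comm |Real.Gamma (-α)| ((Nat.factorial k : ℝ))]
    rw [mul_div_mul_right _ _ (abs_ne_zero.mpr hΓ)]
  rw [heq]
  exact prod_bound α hα k hk
end

section
/- Let $0 \le a < b$, $\alpha > 0$, $\rho > 0$, $v > -1$, and let $y(t) = (b^\rho - t^\rho)^v$ for $t \in [a,b]$. Then for every $t \in [a,b)$, $I_{b-}^{\alpha,\rho} y(t) = \frac{\rho^{-\alpha}\, \Gamma(v+1)}{\Gamma(\alpha+v+1)}(b^\rho - t^\rho)^{\alpha+v}$. -/
open Real MeasureTheory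

/-- The right Katugampola fractional integral
`I_{b-}^{α,ρ} x (t) = ρ^{1-α}/Γ(α) ∫_t^b τ^{ρ-1} (τ^ρ - t^ρ)^{α-1} x(τ) dτ`. -/
noncomputable def katugampolaRight (b α ρ : ℝ) (x : ℝ → ℝ) (t : ℝ) : ℝ :=
  ρ ^ (1 - α) / Real.Gamma α * ∫ τ in t..b, τ ^ (ρ - 1) * (τ ^ ρ - t ^ ρ) ^ (α - 1) * x τ

lemma real_beta (α w : ℝ) (hα : 0 < α) (hw : 0 < w) :
    ∫ x in (0:ℝ)..1, x ^ (α - 1) * (1 - x) ^ (w - 1) =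
      Real.Gamma α * Real.Gamma w / Real.Gamma (α + w) := by
  have key := Complex.Gamma_mul_Gamma_eq_betaIntegral
    (s := (α : ℂ)) (t := (w : ℂ)) (by simpa using hα) (by simpa using hw)
  have hB : Complex.betaIntegral (α : ℂ) (w : ℂ) =
      ((∫ x in (0:ℝ)..1, x ^ (α - 1) * (1 - x) ^ (w - 1) : ℝ) : ℂ) := by
    rw [Complex.betaIntegral, ← intervalIntegral.integral_ofReal]
    refine intervalIntegral.integral_congr fun x hx => ?_
    rw [Set.uIcc_of_le zero_le_one, Set.mem_Icc] at hx
    rw [Complex.ofReal_mul, Complex.ofReal_cpow hx.1,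
      Complex.ofReal_cpow (by linarith [hx.2] : (0:ℝ) ≤ 1 - x)]
    push_cast
    ring
  rw [hB] at key
  have hG : Real.Gamma (α + w) ≠ 0 := (Real.Gamma_pos_of_pos (by linarith)).ne'
  have : Real.Gamma α * Real.Gamma w =
      Real.Gamma (α + w) * ∫ x in (0:ℝ)..1, x ^ (α - 1) * (1 - x) ^ (w - 1) := by
    have := key
    rw [Complex.Gamma_ofReal, Complex.Gamma_ofReal, ← Complex.ofReal_add,
      Complex.Gamma_ofReal, ← Complex.ofReal_mul, ← Complex.ofReal_mul] at this
    exact_mod_cast this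
  rw [this]
  field_simp

lemma beta_scaled (α w c d : ℝ) (hα : 0 < α) (hw : 0 < w) (hcd : c < d) :
    ∫ u in c..d, (u - c) ^ (α - 1) * (d - u) ^ (w - 1) =
      (d - c) ^ (α + w - 1) * (Real.Gamma α * Real.Gamma w / Real.Gamma (α + w)) := by
  have hdc : (0:ℝ) < d - c := by linarith
  have key := intervalIntegral.integral_comp_mul_add
    (a := (0:ℝ)) (b := 1) (fun u => (u - c) ^ (α - 1) * (d - u) ^ (w - 1)) hdc.ne' c
  simp only [mul_zero, zero_add, mul_one] at key
  have h1 : d - c + c = d := by ring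
  rw [h1] at key
  have h2 : ∫ x in (0:ℝ)..1, (fun u => (u - c) ^ (α - 1) * (d - u) ^ (w - 1)) ((d - c) * x + c)
      = (d - c) ^ (α - 1) * (d - c) ^ (w - 1) *
        ∫ x in (0:ℝ)..1, x ^ (α - 1) * (1 - x) ^ (w - 1) := by
    rw [← intervalIntegral.integral_const_mul]
    refine intervalIntegral.integral_congr fun x hx => ?_
    rw [Set.uIcc_of_le zero_le_one, Set.mem_Icc] at hx
    have e1 : (d - c) * x + c - c = (d - c) * x := by ring
    have e2 : d - ((d - c) * x + c) = (d - c) * (1 - x) := by ring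
    simp only [e1, e2]
    rw [Real.mul_rpow hdc.le hx.1, Real.mul_rpow hdc.le (by linarith [hx.2])]
    ring
  rw [h2, real_beta α w hα hw] at key
  have : ∫ u in c..d, (u - c) ^ (α - 1) * (d - u) ^ (w - 1)
      = (d - c) * ((d - c) ^ (α - 1) * (d - c) ^ (w - 1) *
        (Real.Gamma α * Real.Gamma w / Real.Gamma (α + w))) := by
    have h3 := key.symm
    rw [smul_eq_mul, inv_mul_eq_iff_eq_mul₀ hdc.ne'] at h3
    exact h3
  rw [this, ← Real.rpow_add hdc, ← mul_assoc]
  nth_rw 1 [← Real.rpow_one (d - c)]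
  rw [← Real.rpow_add hdc]
  ring_nf

lemma rpow_image (t b ρ : ℝ) (ht : 0 ≤ t) (htb : t < b) (hρ : 0 < ρ) :
    (fun x : ℝ => x ^ ρ) '' Set.Ioo t b = Set.Ioo (t ^ ρ) (b ^ ρ) := by
  ext u
  constructor
  · rintro ⟨x, ⟨hx1, hx2⟩, rfl⟩
    exact ⟨Real.rpow_lt_rpow ht hx1 hρ, Real.rpow_lt_rpow (le_trans ht hx1.le) hx2 hρ⟩
  · rintro ⟨h1, h2⟩
    have hu0 : 0 < u := lt_of_le_of_lt (Real.rpow_nonneg ht ρ) h1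
    refine ⟨u ^ ρ⁻¹, ⟨?_, ?_⟩, Real.rpow_inv_rpow hu0.le hρ.ne'⟩
    · have := Real.rpow_lt_rpow (Real.rpow_nonneg ht ρ) h1 (inv_pos.mpr hρ)
      rwa [Real.rpow_rpow_inv ht hρ.ne'] at this
    · have := Real.rpow_lt_rpow hu0.le h2 (inv_pos.mpr hρ)
      rwa [Real.rpow_rpow_inv (le_trans ht htb.le) hρ.ne'] at this

lemma rpow_subst (t b ρ : ℝ) (ht : 0 ≤ t) (htb : t < b) (hρ : 0 < ρ) (g : ℝ → ℝ) :
    ∫ u in Set.Ioo (t ^ ρ) (b ^ ρ), g u =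
      ∫ x in Set.Ioo t b, (ρ * x ^ (ρ - 1)) * g (x ^ ρ) := by
  rw [← rpow_image t b ρ ht htb hρ]
  rw [MeasureTheory.integral_image_eq_integral_abs_deriv_smul measurableSet_Ioo
    (f' := fun x => ρ * x ^ (ρ - 1)) (fun x hx => ((Real.hasDerivAt_rpow_const
      (Or.inl (lt_of_le_of_lt ht hx.1).ne')).hasDerivWithinAt)) ?_ g]
  · refine MeasureTheory.setIntegral_congr_fun measurableSet_Ioo fun x hx => ?_
    have hx0 : 0 < x := lt_of_le_of_lt ht hx.1
    rw [smul_eq_mul, abs_of_nonneg (mul_nonneg hρ.le (Real.rpow_nonneg hx0.le _))]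
  · intro x hx y hy hxy
    have hx0 : 0 ≤ x := le_trans ht hx.1.le
    have hy0 : 0 ≤ y := le_trans ht hy.1.le
    rcases lt_trichotomy x y with h | h | h
    · exact absurd hxy (ne_of_lt (Real.rpow_lt_rpow hx0 h hρ))
    · exact h
    · exact absurd hxy.symm (ne_of_lt (Real.rpow_lt_rpow hy0 h hρ))

theorem katugampola_right_power' (a b α ρ v : ℝ) (ha : 0 ≤ a) (hab : a < b)
    (hα : 0 < α) (hρ : 0 < ρ) (hv : -1 < v) :
    ∀ t ∈ Set.Ico a b,
      (ρ ^ (1 - α) / Real.Gamma α *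
        ∫ τ in t..b, τ ^ (ρ - 1) * (τ ^ ρ - t ^ ρ) ^ (α - 1) * (b ^ ρ - τ ^ ρ) ^ v) =
        ρ ^ (-α) * Real.Gamma (v + 1) / Real.Gamma (α + v + 1) *
          (b ^ ρ - t ^ ρ) ^ (α + v) := by
  rintro t ⟨ht0', htb⟩
  have ht0 : 0 ≤ t := le_trans ha ht0'
  have hcd : t ^ ρ < b ^ ρ := Real.rpow_lt_rpow ht0 htb hρ
  -- step 1: the interval integral as a set integral over Ioo
  have step1 : ∫ τ in t..b, τ ^ (ρ - 1) * (τ ^ ρ - t ^ ρ) ^ (α - 1) * (b ^ ρ - τ ^ ρ) ^ v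
      = ∫ τ in Set.Ioo t b, τ ^ (ρ - 1) * (τ ^ ρ - t ^ ρ) ^ (α - 1) * (b ^ ρ - τ ^ ρ) ^ v := by
    rw [intervalIntegral.integral_of_le htb.le, MeasureTheory.integral_Ioc_eq_integral_Ioo]
  -- step 2: substitution u = τ^ρ
  have step2 : ∫ u in Set.Ioo (t ^ ρ) (b ^ ρ), (u - t ^ ρ) ^ (α - 1) * (b ^ ρ - u) ^ v
      = ρ * ∫ τ in Set.Ioo t b, τ ^ (ρ - 1) * (τ ^ ρ - t ^ ρ) ^ (α - 1) * (b ^ ρ - τ ^ ρ) ^ v := by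
    rw [rpow_subst t b ρ ht0 htb hρ (fun u => (u - t ^ ρ) ^ (α - 1) * (b ^ ρ - u) ^ v),
      ← MeasureTheory.integral_const_mul]
    refine MeasureTheory.setIntegral_congr_fun measurableSet_Ioo fun x hx => ?_
    ring
  -- step 3: the Beta value
  have step3 : ∫ u in Set.Ioo (t ^ ρ) (b ^ ρ), (u - t ^ ρ) ^ (α - 1) * (b ^ ρ - u) ^ v
      = (b ^ ρ - t ^ ρ) ^ (α + v) *
        (Real.Gamma α * Real.Gamma (v + 1) / Real.Gamma (α + v + 1)) := by
    rw [← MeasureTheory.integral_Ioc_eq_integral_Ioo,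
      ← intervalIntegral.integral_of_le hcd.le]
    have := beta_scaled α (v + 1) (t ^ ρ) (b ^ ρ) hα (by linarith) hcd
    simp only [add_sub_cancel_right] at this
    rw [show α + (v + 1) - 1 = α + v by ring, show α + (v + 1) = α + v + 1 by ring] at this
    exact this
  have hGα : Real.Gamma α ≠ 0 := (Real.Gamma_pos_of_pos hα).ne'
  have hkey : ∫ τ in t..b, τ ^ (ρ - 1) * (τ ^ ρ - t ^ ρ) ^ (α - 1) * (b ^ ρ - τ ^ ρ) ^ v
      = ρ⁻¹ * ((b ^ ρ - t ^ ρ) ^ (α + v) *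
        (Real.Gamma α * Real.Gamma (v + 1) / Real.Gamma (α + v + 1))) := by
    rw [step1, ← step3, step2, ← mul_assoc, inv_mul_cancel₀ hρ.ne', one_mul]
  have hGs : Real.Gamma (α + v + 1) ≠ 0 := (Real.Gamma_pos_of_pos (by linarith)).ne'
  rw [hkey, show (1 - α) = 1 + (-α) by ring, Real.rpow_add hρ, Real.rpow_one]
  field_simp

theorem katugampola_right_power (a b α ρ v : ℝ) (ha : 0 ≤ a) (hab : a < b)
    (hα : 0 < α) (hρ : 0 < ρ) (hv : -1 < v) :
    ∀ t ∈ Set.Ico a b,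
      katugampolaRight b α ρ (fun s => (b ^ ρ - s ^ ρ) ^ v) t =
        ρ ^ (-α) * Real.Gamma (v + 1) / Real.Gamma (α + v + 1) *
          (b ^ ρ - t ^ ρ) ^ (α + v) := by
  intro t ht
  exact katugampola_right_power' a b α ρ v ha hab hα hρ hv t ht
end

section
/- Let $0 \le a < b$, $\alpha > 0$, $\rho > 0$, and let $x : [a,b] \to \mathbb{R}$ be continuously differentiable. Then for every $t \in (a,b]$, $I_{a+}^{\alpha,\rho} x(t) = \frac{\rho^{-\alpha}}{\Gamma(\alpha+1)}(t^\rho - a^\rho)^{\alpha} x(a) + \frac{\rho^{-\alpha}}{\Gamma(\alpha+1)} \int_a^t (t^\rho - \tau^\rho)^\alpha\, \dot{x}(\tau)\, d\tau$. -/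
open Real MeasureTheory

/-- The left Katugampola fractional integral
`I_{a+}^{α,ρ} x (t) = ρ^{1-α}/Γ(α) ∫_a^t τ^{ρ-1} (t^ρ - τ^ρ)^{α-1} x(τ) dτ`. -/
noncomputable def katugampolaLeft (a α ρ : ℝ) (x : ℝ → ℝ) (t : ℝ) : ℝ :=
  ρ ^ (1 - α) / Real.Gamma α * ∫ τ in a..t, τ ^ (ρ - 1) * (t ^ ρ - τ ^ ρ) ^ (α - 1) * x τ

private lemma cont_rpow_const {c : ℝ} (hc : 0 ≤ c) : Continuous fun x : ℝ => x ^ c :=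
  continuous_iff_continuousAt.mpr fun u => Real.continuousAt_rpow_const u c (Or.inr hc)

/-- Integrability of the Katugampola kernel. -/
private lemma katu_integrable {a t α ρ : ℝ} (ha : 0 ≤ a) (hat : a < t) (hα : 0 < α)
    (hρ : 0 < ρ) :
    IntervalIntegrable (fun τ => τ ^ (ρ - 1) * (t ^ ρ - τ ^ ρ) ^ (α - 1)) volume a t := by
  have ht0 : 0 < t := lt_of_le_of_lt ha hat
  set m : ℝ := (a + t) / 2 with hm
  have ham : a < m := by simp only [hm]; linarith
  have hmt : m < t := by simp only [hm]; linarith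
  have hm0 : 0 < m := by simp only [hm]; linarith
  apply IntervalIntegrable.trans (b := m)
  · -- on [a, m] : τ^(ρ-1) is rpow-integrable, the other factor is continuous
    have h1 : IntervalIntegrable (fun τ : ℝ => τ ^ (ρ - 1)) volume a m :=
      intervalIntegral.intervalIntegrable_rpow' (by linarith)
    refine h1.mul_continuousOn ?_
    intro τ hτ
    rw [Set.uIcc_of_le ham.le] at hτ
    have hτm : τ ≤ m := hτ.2
    have hτ0 : 0 ≤ τ := ha.trans hτ.1
    have hpos : 0 < t ^ ρ - τ ^ ρ := by
      have : τ ^ ρ < t ^ ρ := Real.rpow_lt_rpow hτ0 (lt_of_le_of_lt hτm hmt) hρ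
      linarith
    exact (((continuous_const.sub (cont_rpow_const hρ.le)).continuousAt).rpow_const
      (Or.inl hpos.ne')).continuousWithinAt
  · -- on [m, t]
    have key : IntervalIntegrable (fun τ : ℝ => (t ^ ρ - τ ^ ρ) ^ (α - 1)) volume m t := by
      rcases le_or_gt 1 α with h1 | h1
      · -- continuous case
        refine ContinuousOn.intervalIntegrable ?_
        intro τ _
        exact (((continuous_const.sub (cont_rpow_const hρ.le)).continuousAt).rpow_const
          (Or.inr (by linarith))).continuousWithinAt
      · -- singular case : domination by c^(α-1) * (t-τ)^(α-1)
        set c : ℝ := ρ * min (m ^ (ρ - 1)) (t ^ (ρ - 1)) with hc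
        have hc0 : 0 < c := by
          apply mul_pos hρ
          exact lt_min (Real.rpow_pos_of_pos hm0 _) (Real.rpow_pos_of_pos ht0 _)
        have hdom : IntervalIntegrable (fun τ : ℝ => c ^ (α - 1) * (t - τ) ^ (α - 1))
            volume m t := by
          have h0 : IntervalIntegrable (fun u : ℝ => u ^ (α - 1)) volume (t - m) 0 :=
            intervalIntegral.intervalIntegrable_rpow' (by linarith)
          have := (h0.comp_sub_left t).const_mul (c ^ (α - 1))
          simpa using this
        apply hdom.mono_fun
        · exact ((by fun_prop : Measurable fun τ : ℝ =>
            (t ^ ρ - τ ^ ρ) ^ (α - 1))).aestronglyMeasurable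
        · rw [Set.uIoc_of_le hmt.le]
          filter_upwards [ae_restrict_mem measurableSet_Ioc] with τ hτ
          have hτ0 : 0 < τ := lt_trans hm0 hτ.1
          rcases eq_or_lt_of_le hτ.2 with rfl | hτt
          · -- τ = t : LHS = 0
            simp only [sub_self, Real.zero_rpow (by linarith : α - 1 ≠ 0)]
            simp [norm_nonneg]
          · -- τ < t : MVT bound
            have hbase : 0 ≤ t ^ ρ - τ ^ ρ := by
              have : τ ^ ρ ≤ t ^ ρ := Real.rpow_le_rpow hτ0.le hτ.2 hρ.le
              linarith
            have hnn1 : (0:ℝ) ≤ (t ^ ρ - τ ^ ρ) ^ (α - 1) := Real.rpow_nonneg hbase _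
            have hnn2 : (0:ℝ) ≤ c ^ (α - 1) * (t - τ) ^ (α - 1) :=
              mul_nonneg (Real.rpow_nonneg hc0.le _) (Real.rpow_nonneg (by linarith) _)
            rw [Real.norm_of_nonneg hnn1, Real.norm_of_nonneg hnn2]
            -- MVT on [τ, t]
            obtain ⟨ξ, hξ, hslope⟩ := exists_hasDerivAt_eq_slope (fun y : ℝ => y ^ ρ)
              (fun y : ℝ => ρ * y ^ (ρ - 1)) hτt
              ((cont_rpow_const hρ.le).continuousOn)
              (fun y hy => Real.hasDerivAt_rpow_const (Or.inl (by
                have h5 : τ < y := hy.1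
                have : (0:ℝ) < y := by linarith
                exact this.ne')))
            have hξ0 : 0 < ξ := lt_trans hτ0 hξ.1
            have hcle : c ≤ ρ * ξ ^ (ρ - 1) := by
              have hmin : min (m ^ (ρ - 1)) (t ^ (ρ - 1)) ≤ ξ ^ (ρ - 1) := by
                rcases le_or_gt 1 ρ with hρ1 | hρ1
                · refine le_trans (min_le_left _ _) ?_
                  exact Real.rpow_le_rpow hm0.le (le_trans hτ.1.le hξ.1.le) (by linarith)
                · refine le_trans (min_le_right _ _) ?_
                  exact Real.rpow_le_rpow_of_nonpos hξ0 hξ.2.le (by linarith)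
              calc c = ρ * min (m ^ (ρ - 1)) (t ^ (ρ - 1)) := hc
                _ ≤ ρ * ξ ^ (ρ - 1) := by nlinarith
            have hmvt : t ^ ρ - τ ^ ρ = ρ * ξ ^ (ρ - 1) * (t - τ) := by
              rw [eq_div_iff (by linarith : t - τ ≠ 0)] at hslope
              linarith [hslope]
            have hge : c * (t - τ) ≤ t ^ ρ - τ ^ ρ := by
              rw [hmvt]; nlinarith
            have hpos : 0 < c * (t - τ) := mul_pos hc0 (by linarith)
            calc (t ^ ρ - τ ^ ρ) ^ (α - 1) ≤ (c * (t - τ)) ^ (α - 1) :=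
                  Real.rpow_le_rpow_of_nonpos hpos hge (by linarith)
              _ = c ^ (α - 1) * (t - τ) ^ (α - 1) :=
                  Real.mul_rpow hc0.le (by linarith)
    refine key.continuousOn_mul ?_
    intro τ hτ
    rw [Set.uIcc_of_le hmt.le] at hτ
    exact (Real.continuousAt_rpow_const _ (ρ - 1)
      (Or.inl (by have := hτ.1; linarith : (0:ℝ) < τ).ne')).continuousWithinAt

theorem katugampola_left_parts (a b α ρ : ℝ) (ha : 0 ≤ a) (hab : a < b)
    (hα : 0 < α) (hρ : 0 < ρ) (x x' : ℝ → ℝ)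
    (hx : ∀ t ∈ Set.Icc a b, HasDerivAt x (x' t) t)
    (hx' : ContinuousOn x' (Set.Icc a b)) :
    ∀ t ∈ Set.Ioc a b,
      katugampolaLeft a α ρ x t =
        ρ ^ (-α) / Real.Gamma (α + 1) * (t ^ ρ - a ^ ρ) ^ α * x a +
          ρ ^ (-α) / Real.Gamma (α + 1) * ∫ τ in a..t, (t ^ ρ - τ ^ ρ) ^ α * x' τ := by
  intro t ht
  obtain ⟨hat, htb⟩ := ht
  have hsub : Set.Icc a t ⊆ Set.Icc a b := Set.Icc_subset_Icc le_rfl htb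
  set g : ℝ → ℝ := fun τ => τ ^ (ρ - 1) * (t ^ ρ - τ ^ ρ) ^ (α - 1) with hg
  set G : ℝ → ℝ := fun τ => -(1 / (ρ * α)) * (t ^ ρ - τ ^ ρ) ^ α with hGdef
  have hρα : ρ * α ≠ 0 := by positivity
  -- continuity of G
  have hGcont : Continuous G := by
    exact continuous_const.mul ((cont_rpow_const hα.le).comp
      (continuous_const.sub (cont_rpow_const hρ.le)))
  -- derivative of G
  have hG_deriv : ∀ τ ∈ Set.Ioo a t, HasDerivAt G (g τ) τ := by
    intro τ hτ
    have hτ0 : 0 < τ := lt_of_le_of_lt ha hτ.1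
    have hpos : 0 < t ^ ρ - τ ^ ρ := by
      have : τ ^ ρ < t ^ ρ := Real.rpow_lt_rpow hτ0.le hτ.2 hρ
      linarith
    have h1 : HasDerivAt (fun y : ℝ => y ^ ρ) (ρ * τ ^ (ρ - 1)) τ :=
      Real.hasDerivAt_rpow_const (Or.inl hτ0.ne')
    have h2 : HasDerivAt (fun y : ℝ => t ^ ρ - y ^ ρ) (-(ρ * τ ^ (ρ - 1))) τ :=
      h1.const_sub _
    have h3 : HasDerivAt (fun u : ℝ => u ^ α) (α * (t ^ ρ - τ ^ ρ) ^ (α - 1))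
        (t ^ ρ - τ ^ ρ) := Real.hasDerivAt_rpow_const (Or.inl hpos.ne')
    have h4 : HasDerivAt G (-(1 / (ρ * α)) * (α * (t ^ ρ - τ ^ ρ) ^ (α - 1) * -(ρ * τ ^ (ρ - 1)))) τ :=
      (h3.comp τ h2).const_mul (-(1 / (ρ * α)))
    convert h4 using 1
    simp only [hg, Function.comp]
    field_simp
  -- continuity of x on [a, t]
  have hx_cont : ContinuousOn x (Set.Icc a t) := fun τ hτ =>
    ((hx τ (hsub hτ)).continuousAt).continuousWithinAt
  -- integrability
  have hint_g : IntervalIntegrable g volume a t := katu_integrable ha hat hα hρ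
  have hgx : IntervalIntegrable (fun τ => g τ * x τ) volume a t := by
    refine hint_g.mul_continuousOn ?_
    rwa [Set.uIcc_of_le hat.le]
  have hGx'cont : ContinuousOn (fun τ => G τ * x' τ) (Set.uIcc a t) := by
    rw [Set.uIcc_of_le hat.le]
    exact (hGcont.continuousOn).mul (hx'.mono hsub)
  have hGx' : IntervalIntegrable (fun τ => G τ * x' τ) volume a t :=
    hGx'cont.intervalIntegrable
  -- FTC
  have hH_cont : ContinuousOn (fun τ => G τ * x τ) (Set.Icc a t) :=
    (hGcont.continuousOn).mul hx_cont
  have hH_deriv : ∀ τ ∈ Set.Ioo a t,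
      HasDerivWithinAt (fun τ => G τ * x τ) (g τ * x τ + G τ * x' τ) (Set.Ioi τ) τ := by
    intro τ hτ
    have := (hG_deriv τ hτ).mul (hx τ (hsub ⟨hτ.1.le, hτ.2.le⟩))
    exact this.hasDerivWithinAt
  have ftc := intervalIntegral.integral_eq_sub_of_hasDeriv_right_of_le hat.le hH_cont
    hH_deriv (hgx.add hGx')
  rw [intervalIntegral.integral_add hgx hGx'] at ftc
  have hGt : G t = 0 := by
    simp [hGdef, Real.zero_rpow hα.ne']
  have hGa : G a = -(1 / (ρ * α)) * (t ^ ρ - a ^ ρ) ^ α := rfl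
  rw [hGt, zero_mul, zero_sub, hGa] at ftc
  have hsplit : (∫ τ in a..t, g τ * x τ) =
      1 / (ρ * α) * (t ^ ρ - a ^ ρ) ^ α * x a - ∫ τ in a..t, G τ * x' τ := by
    linarith [ftc]
  have hGx'val : (∫ τ in a..t, G τ * x' τ) =
      -(1 / (ρ * α)) * ∫ τ in a..t, (t ^ ρ - τ ^ ρ) ^ α * x' τ := by
    rw [← intervalIntegral.integral_const_mul]
    congr 1 with τ
    simp [hGdef]; ring
  rw [hGx'val] at hsplit
  -- assemble
  have hker : katugampolaLeft a α ρ x t = ρ ^ (1 - α) / Real.Gamma α *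
      ∫ τ in a..t, g τ * x τ := by
    simp only [katugampolaLeft, hg]
  rw [hker, hsplit]
  have hΓ : Real.Gamma (α + 1) = α * Real.Gamma α := Real.Gamma_add_one hα.ne'
  have hΓpos : 0 < Real.Gamma α := Real.Gamma_pos_of_pos hα
  have hρpow : ρ ^ (1 - α) = ρ * ρ ^ (-α) := by
    rw [show (1 : ℝ) - α = 1 + -α by ring, Real.rpow_add hρ, Real.rpow_one]
  rw [hΓ, hρpow]
  field_simp
  ring
end

section
/- Let $0 \le a < b$, $\rho > 0$, $n \in \mathbb{N}$ with $n \ge 1$, and let $x : [a,b] \to \mathbb{R}$ be continuous. Then for every $t \in [a,b]$, the $n$-fold iterated integral $\int_a^t \tau_1^{\rho-1}\, d\tau_1 \int_a^{\tau_1} \tau_2^{\rho-1}\, d\tau_2 \cdots \int_a^{\tau_{n-1}} \tau_n^{\rho-1} x(\tau_n)\, d\tau_n$ equals $\frac{\rho^{1-n}}{(n-1)!} \int_a^t \tau^{\rho-1}(t^\rho - \tau^\rho)^{n-1} x(\tau)\, d\tau$; that is, the left Katugampola fractional integral of integer order $\alpha = n$ coincides with the $n$-fold $\rho$-weighted iterated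 integral. -/
open Real MeasureTheory

/-- The `n`-fold `ρ`-weighted iterated integral
`∫_a^t τ₁^{ρ-1} dτ₁ ∫_a^{τ₁} τ₂^{ρ-1} dτ₂ ⋯ ∫_a^{τ_{n-1}} τ_n^{ρ-1} x(τ_n) dτ_n`. -/
noncomputable def iterKat (ρ a : ℝ) (x : ℝ → ℝ) : ℕ → ℝ → ℝ
  | 0, t => x t
  | n + 1, t => ∫ τ in a..t, τ ^ (ρ - 1) * iterKat ρ a x n τ


open Set Finset intervalIntegral

namespace KatAux




/-- Auxiliary primitive `J e t = ∫_a^t τ^e x(τ) dτ`. -/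
noncomputable def J (a : ℝ) (x : ℝ → ℝ) (e t : ℝ) : ℝ := ∫ τ in a..t, τ ^ e * x τ

/-- Binomial expansion of the Katugampola kernel integral. -/
noncomputable def S (ρ a : ℝ) (x : ℝ → ℝ) (m : ℕ) (t : ℝ) : ℝ :=
  ∑ k ∈ Finset.range (m + 1),
    (-1 : ℝ) ^ (k + m) * (m.choose k : ℝ) *
      (t ^ (ρ * (k : ℝ)) * J a x (ρ * ((m - k : ℕ) : ℝ) + ρ - 1) t)

variable {a b ρ : ℝ} {x : ℝ → ℝ}

lemma epos (hρ : 0 < ρ) (c : ℕ) : (-1 : ℝ) < ρ * (c : ℝ) + ρ - 1 := by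
  have : (0:ℝ) ≤ ρ * (c : ℝ) := by positivity
  linarith

section

set_option linter.unusedSectionVars false

variable (ha : 0 ≤ a) (hab : a < b) (hρ : 0 < ρ) (hx : ContinuousOn x (Set.Icc a b))
include ha hab hρ hx

lemma integ {e : ℝ} (he : -1 < e) {t : ℝ} (ht : t ∈ Set.Icc a b) :
    IntervalIntegrable (fun τ => τ ^ e * x τ) volume a t := by
  refine (intervalIntegrable_rpow' he).mul_continuousOn (hx.mono ?_)
  rw [uIcc_of_le ht.1]
  exact Icc_subset_Icc le_rfl ht.2

lemma J_cont {e : ℝ} (he : -1 < e) : ContinuousOn (J a x e) (Set.Icc a b) := by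
  have h := intervalIntegral.continuousOn_primitive_interval (μ := volume) (a := a) (b := b)
    (f := fun τ => τ ^ e * x τ) ?_
  · rwa [uIcc_of_le hab.le] at h
  · rw [← intervalIntegrable_iff']
    exact integ ha hab hρ hx he ⟨hab.le, le_rfl⟩

lemma J_deriv {e : ℝ} (he : -1 < e) {t : ℝ} (ht : t ∈ Set.Ioo a b) :
    HasDerivAt (J a x e) (t ^ e * x t) t := by
  have hco : ContinuousOn (fun τ => τ ^ e * x τ) (Set.Ioo a b) := by
    intro τ hτ
    exact ((Real.continuousAt_rpow_const τ e (Or.inl (ha.trans_lt hτ.1).ne')).continuousWithinAt).mul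
      ((hx.continuousAt (Icc_mem_nhds hτ.1 hτ.2)).continuousWithinAt)
  exact integral_hasDerivAt_right (integ ha hab hρ hx he ⟨ht.1.le, ht.2.le⟩)
    (hco.stronglyMeasurableAtFilter isOpen_Ioo t ht)
    (hco.continuousAt (Ioo_mem_nhds ht.1 ht.2))

lemma S_cont (m : ℕ) : ContinuousOn (S ρ a x m) (Set.Icc a b) := by
  apply continuousOn_finset_sum
  intro k _
  exact continuousOn_const.mul
    (((Real.continuous_rpow_const (by positivity)).continuousOn).mul
      (J_cont ha hab hρ hx (epos hρ _)))

lemma S_at_a (m : ℕ) : S ρ a x m a = 0 := by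
  simp [S, J]

end





set_option linter.unusedSectionVars false

variable {a b ρ : ℝ} {x : ℝ → ℝ}

variable (ha : 0 ≤ a) (hab : a < b) (hρ : 0 < ρ) (hx : ContinuousOn x (Set.Icc a b))
include ha hab hρ hx

lemma S_deriv (m : ℕ) {t : ℝ} (ht : t ∈ Set.Ioo a b) :
    HasDerivAt (S ρ a x (m + 1)) (ρ * ((m : ℝ) + 1) * t ^ (ρ - 1) * S ρ a x m t) t := by
  have ht0 : 0 < t := ha.trans_lt ht.1
  have hsum : HasDerivAt (S ρ a x (m + 1))
      (∑ k ∈ Finset.range (m + 1 + 1), (-1 : ℝ) ^ (k + (m + 1)) * ((m + 1).choose k : ℝ) *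
        (ρ * (k : ℝ) * t ^ (ρ * (k : ℝ) - 1) * J a x (ρ * ((m + 1 - k : ℕ) : ℝ) + ρ - 1) t +
          t ^ (ρ * (k : ℝ)) * (t ^ (ρ * ((m + 1 - k : ℕ) : ℝ) + ρ - 1) * x t))) t := by
    unfold S
    apply HasDerivAt.fun_sum
    intro k _
    exact ((Real.hasDerivAt_rpow_const (Or.inl ht0.ne')).mul
      (J_deriv ha hab hρ hx (epos hρ _) ht)).const_mul _
  have key : (∑ k ∈ Finset.range (m + 1 + 1), (-1 : ℝ) ^ (k + (m + 1)) * ((m + 1).choose k : ℝ) *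
        (ρ * (k : ℝ) * t ^ (ρ * (k : ℝ) - 1) * J a x (ρ * ((m + 1 - k : ℕ) : ℝ) + ρ - 1) t +
          t ^ (ρ * (k : ℝ)) * (t ^ (ρ * ((m + 1 - k : ℕ) : ℝ) + ρ - 1) * x t)))
      = ρ * ((m : ℝ) + 1) * t ^ (ρ - 1) * S ρ a x m t := by
    have hsplit : (∑ k ∈ Finset.range (m + 1 + 1), (-1 : ℝ) ^ (k + (m + 1)) * ((m + 1).choose k : ℝ) *
        (ρ * (k : ℝ) * t ^ (ρ * (k : ℝ) - 1) * J a x (ρ * ((m + 1 - k : ℕ) : ℝ) + ρ - 1) t +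
          t ^ (ρ * (k : ℝ)) * (t ^ (ρ * ((m + 1 - k : ℕ) : ℝ) + ρ - 1) * x t)))
      = (∑ k ∈ Finset.range (m + 1 + 1), (-1 : ℝ) ^ (k + (m + 1)) * ((m + 1).choose k : ℝ) *
          (ρ * (k : ℝ) * t ^ (ρ * (k : ℝ) - 1) * J a x (ρ * ((m + 1 - k : ℕ) : ℝ) + ρ - 1) t))
        + (∑ k ∈ Finset.range (m + 1 + 1), (-1 : ℝ) ^ (k + (m + 1)) * ((m + 1).choose k : ℝ) *
          (t ^ (ρ * (k : ℝ)) * (t ^ (ρ * ((m + 1 - k : ℕ) : ℝ) + ρ - 1) * x t))) := by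
      rw [← Finset.sum_add_distrib]
      exact Finset.sum_congr rfl fun k _ => by ring
    have hB : ∀ k ∈ Finset.range (m + 1 + 1),
        (-1 : ℝ) ^ (k + (m + 1)) * ((m + 1).choose k : ℝ) *
          (t ^ (ρ * (k : ℝ)) * (t ^ (ρ * ((m + 1 - k : ℕ) : ℝ) + ρ - 1) * x t))
        = ((-1 : ℝ) ^ k * ((m + 1).choose k : ℝ)) *
            ((-1 : ℝ) ^ (m + 1) * (t ^ (ρ * ((m : ℝ) + 2) - 1) * x t)) := by
      intro k hk
      have hc : (((m + 1) - k : ℕ) : ℝ) = ((m : ℝ) + 1) - (k : ℝ) := by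
        have hk2 : k ≤ m + 1 := Nat.lt_succ_iff.mp (Finset.mem_range.mp hk)
        push_cast [hk2]
        ring
      have hexp : ρ * (k : ℝ) + (ρ * ((m + 1 - k : ℕ) : ℝ) + ρ - 1) = ρ * ((m : ℝ) + 2) - 1 := by
        rw [hc]; ring
      have ht' : t ^ (ρ * (k : ℝ)) * t ^ (ρ * ((m + 1 - k : ℕ) : ℝ) + ρ - 1)
          = t ^ (ρ * ((m : ℝ) + 2) - 1) := by
        rw [← Real.rpow_add ht0, hexp]
      rw [show t ^ (ρ * (k : ℝ)) * (t ^ (ρ * ((m + 1 - k : ℕ) : ℝ) + ρ - 1) * x t)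
          = (t ^ (ρ * (k : ℝ)) * t ^ (ρ * ((m + 1 - k : ℕ) : ℝ) + ρ - 1)) * x t from by ring,
        ht', pow_add]
      ring
    have hBsum : (∑ k ∈ Finset.range (m + 1 + 1), (-1 : ℝ) ^ (k + (m + 1)) * ((m + 1).choose k : ℝ) *
          (t ^ (ρ * (k : ℝ)) * (t ^ (ρ * ((m + 1 - k : ℕ) : ℝ) + ρ - 1) * x t))) = 0 := by
      rw [Finset.sum_congr rfl hB, ← Finset.sum_mul]
      have hz : (∑ k ∈ Finset.range (m + 1 + 1), (-1 : ℝ) ^ k * ((m + 1).choose k : ℝ)) = 0 := by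
        exact_mod_cast Int.alternating_sum_range_choose_of_ne (Nat.succ_ne_zero m)
      rw [hz, zero_mul]
    have hA : (∑ k ∈ Finset.range (m + 1 + 1), (-1 : ℝ) ^ (k + (m + 1)) * ((m + 1).choose k : ℝ) *
          (ρ * (k : ℝ) * t ^ (ρ * (k : ℝ) - 1) * J a x (ρ * ((m + 1 - k : ℕ) : ℝ) + ρ - 1) t))
        = ρ * ((m : ℝ) + 1) * t ^ (ρ - 1) * S ρ a x m t := by
      rw [Finset.sum_range_succ']
      simp only [Nat.cast_zero, mul_zero, zero_mul, add_zero]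
      unfold S
      rw [Finset.mul_sum]
      apply Finset.sum_congr rfl
      intro j hj
      have hsub : m + 1 - (j + 1) = m - j := Nat.succ_sub_succ m j
      rw [hsub]
      have hsign : (-1 : ℝ) ^ (j + 1 + (m + 1)) = (-1 : ℝ) ^ (j + m) := by
        rw [show j + 1 + (m + 1) = (j + m) + 2 from by omega, pow_add]
        norm_num
      rw [hsign]
      have hcast : ((j + 1 : ℕ) : ℝ) = (j : ℝ) + 1 := by push_cast; ring
      rw [hcast]
      have hpow : t ^ (ρ * ((j : ℝ) + 1) - 1) = t ^ (ρ - 1) * t ^ (ρ * (j : ℝ)) := by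
        rw [← Real.rpow_add ht0]
        congr 1
        ring
      rw [hpow]
      have hc : (((m + 1).choose (j + 1) : ℕ) : ℝ) * ((j : ℝ) + 1)
          = ((m : ℝ) + 1) * ((m.choose j : ℕ) : ℝ) := by
        exact_mod_cast congrArg (Nat.cast : ℕ → ℝ) (Nat.add_one_mul_choose_eq m j).symm
      push_cast at hc ⊢
      linear_combination ((-1 : ℝ) ^ (j + m) * ρ * t ^ (ρ - 1) * t ^ (ρ * (j : ℝ)) *
        J a x (ρ * ((m - j : ℕ) : ℝ) + ρ - 1) t) * hc
    rw [hsplit, hA, hBsum, add_zero]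
  rwa [key] at hsum


end KatAux

namespace KatAux

set_option linter.unusedSectionVars false

variable {a b ρ : ℝ} {x : ℝ → ℝ}
variable (ha : 0 ≤ a) (hab : a < b) (hρ : 0 < ρ) (hx : ContinuousOn x (Set.Icc a b))
include ha hab hρ hx

lemma expand (m : ℕ) {t : ℝ} (ht : t ∈ Set.Icc a b) :
    (∫ τ in a..t, τ ^ (ρ - 1) * (t ^ ρ - τ ^ ρ) ^ m * x τ) = S ρ a x m t := by
  have ht0 : (0:ℝ) ≤ t := ha.trans ht.1
  have hS : S ρ a x m t = ∑ k ∈ Finset.range (m + 1),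
      ∫ τ in a..t, ((-1 : ℝ) ^ (k + m) * (m.choose k : ℝ) * t ^ (ρ * (k : ℝ))) *
        (τ ^ (ρ * ((m - k : ℕ) : ℝ) + ρ - 1) * x τ) := by
    unfold S J
    refine Finset.sum_congr rfl fun k _ => ?_
    rw [intervalIntegral.integral_const_mul]
    ring
  rw [hS, ← intervalIntegral.integral_finset_sum]
  · apply intervalIntegral.integral_congr_ae
    apply MeasureTheory.ae_of_all
    intro τ hτ
    rw [Set.uIoc_of_le ht.1] at hτ
    have hτ0 : 0 < τ := ha.trans_lt hτ.1
    rw [sub_pow, Finset.mul_sum, Finset.sum_mul]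
    refine Finset.sum_congr rfl fun k _ => ?_
    have h1 : (t ^ ρ) ^ k = t ^ (ρ * (k : ℝ)) := by
      rw [Real.rpow_mul ht0, Real.rpow_natCast]
    have h2 : (τ ^ ρ) ^ (m - k) = τ ^ (ρ * ((m - k : ℕ) : ℝ)) := by
      rw [Real.rpow_mul hτ0.le, Real.rpow_natCast]
    have h3 : τ ^ (ρ * ((m - k : ℕ) : ℝ)) * τ ^ (ρ - 1)
        = τ ^ (ρ * ((m - k : ℕ) : ℝ) + ρ - 1) := by
      rw [← Real.rpow_add hτ0, show ρ * ((m - k : ℕ) : ℝ) + (ρ - 1)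
        = ρ * ((m - k : ℕ) : ℝ) + ρ - 1 from by ring]
    rw [h1, h2, ← h3]
    ring
  · intro k _
    exact (integ ha hab hρ hx (epos hρ _) ht).const_mul _

end KatAux


namespace KatAux

set_option linter.unusedSectionVars false

variable {a b ρ : ℝ} {x : ℝ → ℝ}
variable (ha : 0 ≤ a) (hab : a < b) (hρ : 0 < ρ) (hx : ContinuousOn x (Set.Icc a b))
include ha hab hρ hx

lemma key (m : ℕ) : ∀ t ∈ Set.Icc a b,
    iterKat ρ a x (m + 1) t = ρ ^ (-(m : ℝ)) / (m.factorial : ℝ) * S ρ a x m t := by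
  induction m with
  | zero =>
    intro t ht
    simp [iterKat, S, J]
  | succ m ih =>
    intro t ht
    set C : ℝ := ρ ^ (-(m : ℝ)) / (m.factorial : ℝ) with hC
    set C' : ℝ := ρ ^ (-((m : ℝ) + 1)) / ((m + 1).factorial : ℝ) with hC'
    set h : ℝ → ℝ := fun τ => τ ^ (ρ - 1) * (C * S ρ a x m τ) with hh
    have hIntb : IntervalIntegrable h volume a b := by
      apply (intervalIntegrable_rpow' (by linarith : (-1:ℝ) < ρ - 1)).mul_continuousOn
      rw [Set.uIcc_of_le hab.le]
      exact continuousOn_const.mul (S_cont ha hab hρ hx m)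
    have hhc : ContinuousOn h (Set.Ioo a b) := by
      apply ContinuousOn.mul
      · intro τ hτ
        exact (Real.continuousAt_rpow_const τ (ρ - 1)
          (Or.inl (ha.trans_lt hτ.1).ne')).continuousWithinAt
      · exact continuousOn_const.mul ((S_cont ha hab hρ hx m).mono Set.Ioo_subset_Icc_self)
    set F : ℝ → ℝ := fun s => ∫ τ in a..s, h τ with hF
    set G : ℝ → ℝ := fun s => C' * S ρ a x (m + 1) s with hG
    have hiter : ∀ s ∈ Set.Icc a b, iterKat ρ a x (m + 1 + 1) s = F s := by
      intro s hs
      have unf : iterKat ρ a x (m + 1 + 1) s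
          = ∫ τ in a..s, τ ^ (ρ - 1) * iterKat ρ a x (m + 1) τ := rfl
      rw [unf]
      apply intervalIntegral.integral_congr
      intro τ hτ
      rw [Set.uIcc_of_le hs.1] at hτ
      show τ ^ (ρ - 1) * iterKat ρ a x (m + 1) τ = h τ
      rw [ih τ ⟨hτ.1, hτ.2.trans hs.2⟩]
    have hD : ∀ s ∈ Set.Ioo a b, HasDerivAt (fun u => F u - G u) 0 s := by
      intro s hs
      have hsub : Set.uIcc a s ⊆ Set.uIcc a b := by
        rw [Set.uIcc_of_le hab.le, Set.uIcc_of_le hs.1.le]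
        exact Set.Icc_subset_Icc le_rfl hs.2.le
      have hF' : HasDerivAt F (h s) s :=
        intervalIntegral.integral_hasDerivAt_right (hIntb.mono_set hsub)
          (hhc.stronglyMeasurableAtFilter isOpen_Ioo s hs)
          (hhc.continuousAt (Ioo_mem_nhds hs.1 hs.2))
      have hG' : HasDerivAt G (C' * (ρ * ((m : ℝ) + 1) * s ^ (ρ - 1) * S ρ a x m s)) s :=
        (S_deriv ha hab hρ hx m hs).const_mul C'
      have hval : C' * (ρ * ((m : ℝ) + 1) * s ^ (ρ - 1) * S ρ a x m s) = h s := by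
        rw [hh]
        have hfac : ((m + 1).factorial : ℝ) = ((m : ℝ) + 1) * (m.factorial : ℝ) := by
          rw [Nat.factorial_succ]; push_cast; ring
        have hrw : ρ ^ (-((m : ℝ) + 1)) = ρ ^ (-(m : ℝ)) * ρ⁻¹ := by
          rw [show -((m : ℝ) + 1) = -(m : ℝ) + (-1) from by ring, Real.rpow_add hρ,
            Real.rpow_neg_one]
        have hm1 : ((m : ℝ) + 1) ≠ 0 := by positivity
        have hfm : (m.factorial : ℝ) ≠ 0 := by exact_mod_cast m.factorial_ne_zero
        rw [hC', hC, hrw, hfac]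
        field_simp
      have := hF'.sub (hval ▸ hG')
      simp only [sub_self] at this; exact this
    have hFcont : ContinuousOn F (Set.Icc a b) := by
      have hc := intervalIntegral.continuousOn_primitive_interval (μ := volume) (a := a)
        (b := b) (f := h) (by rw [← intervalIntegrable_iff']; exact hIntb)
      rwa [Set.uIcc_of_le hab.le] at hc
    have hGcont : ContinuousOn G (Set.Icc a b) :=
      continuousOn_const.mul (S_cont ha hab hρ hx (m + 1))
    have hDcont : ContinuousOn (fun u => F u - G u) (Set.Icc a b) := hFcont.sub hGcont
    have hint : ∀ s ∈ interior (Set.Icc a b), s ∈ Set.Ioo a b := by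
      rw [interior_Icc]; exact fun s hs => hs
    have hmono := monotoneOn_of_deriv_nonneg (convex_Icc a b) hDcont
      (fun s hs => (hD s (hint s hs)).differentiableAt.differentiableWithinAt)
      (fun s hs => by rw [(hD s (hint s hs)).deriv])
    have hanti := antitoneOn_of_deriv_nonpos (convex_Icc a b) hDcont
      (fun s hs => (hD s (hint s hs)).differentiableAt.differentiableWithinAt)
      (fun s hs => by rw [(hD s (hint s hs)).deriv])
    have haI : a ∈ Set.Icc a b := ⟨le_rfl, hab.le⟩
    have h1 := hmono haI ht ht.1
    have h2 := hanti haI ht ht.1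
    have hDa : F a - G a = 0 := by
      have hSa := S_at_a ha hab hρ hx (m + 1)
      simp [hF, hG, hSa, intervalIntegral.integral_same]
    have hFG : F t = G t := by
      simp only at h1 h2
      have : F t - G t = F a - G a := le_antisymm h2 h1
      rw [hDa] at this
      linarith
    rw [hiter t ht, hFG, hG]
    have hcast : -(((m + 1 : ℕ)) : ℝ) = -((m : ℝ) + 1) := by push_cast; ring
    rw [hcast]

end KatAux


theorem iterated_integral_eq_katugampola (a b ρ : ℝ) (ha : 0 ≤ a) (hab : a < b)
    (hρ : 0 < ρ) (n : ℕ) (hn : 1 ≤ n) (x : ℝ → ℝ)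
    (hx : ContinuousOn x (Set.Icc a b)) :
    ∀ t ∈ Set.Icc a b,
      iterKat ρ a x n t =
        ρ ^ (1 - (n : ℝ)) / (Nat.factorial (n - 1) : ℝ) *
          ∫ τ in a..t, τ ^ (ρ - 1) * (t ^ ρ - τ ^ ρ) ^ (n - 1) * x τ := by
  intro t ht
  obtain ⟨m, rfl⟩ : ∃ m, n = m + 1 := ⟨n - 1, by omega⟩
  rw [KatAux.key ha hab hρ hx m t ht]
  simp only [Nat.add_sub_cancel]
  rw [KatAux.expand ha hab hρ hx m ht]
  have hcast : (1 : ℝ) - ((m + 1 : ℕ) : ℝ) = -(m : ℝ) := by push_cast; ring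
  rw [hcast]
end
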